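/- arXiv:1907.04413 — 9 statements merged into one kernel-verified Lean document; each statement's English description precedes it below -/
import Mathlib

section
/- Let (U, S_1, ..., S_m) be a finite set system with set weights w_i ≥ 0, let k be an integer, and let β ≥ 1. Suppose the integrality-gap hypothesis holds: for every subset U' of U and every vector x ∈ [0,1]^m satisfying Σ_{i : e ∈ S_i} x_i ≥ 1 for all e ∈ U', there exists T ⊆ {1,...,m} with U' ⊆ ∪_{i∈T} S_i and Σ_{i∈T} w_i ≤ β·Σ_i w_i x_i. Let (x, z) be any feasible solution of PSC-LP (i.e., x_i ≥ 0, z_j ∈ [0,1], Σ_{i : e_j ∈ S_i} x_i ≥ z_j for every e_j ∈ U, and Σ_{e_j ∈ U} z_j ≥ k), and let W = max_i w_i. Then there exists T ⊆ {1,...,m} with |∪_{i∈T} S_i| ≥ k and Σ_{i∈T} w_i ≤ (e/(e-1))·(β+1)·Σ_i w_i x_i + W. -/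
open Finset

lemma psc_min_one_sum {ι : Type*} (s : Finset ι) (f : ι → ℝ)
    (hf : ∀ i ∈ s, 0 ≤ f i) :
    min 1 (∑ i ∈ s, f i) ≤ ∑ i ∈ s, min 1 (f i) := by
  by_cases h : ∃ i ∈ s, 1 ≤ f i
  · obtain ⟨i, hi, hfi⟩ := h
    have h2 : min 1 (f i) ≤ ∑ j ∈ s, min 1 (f j) :=
      Finset.single_le_sum (fun j hj => le_min zero_le_one (hf j hj)) hi
    calc min 1 (∑ i ∈ s, f i) ≤ 1 := min_le_left _ _
      _ = min 1 (f i) := (min_eq_left hfi).symm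
      _ ≤ _ := h2
  · push_neg at h
    have hall : ∀ i ∈ s, min 1 (f i) = f i := fun i hi => min_eq_right (h i hi).le
    rw [show (∑ i ∈ s, min 1 (f i)) = ∑ i ∈ s, f i from Finset.sum_congr rfl hall]
    exact min_le_right _ _

lemma psc_double_count' {α : Type*} [DecidableEq α] [Fintype α] {m : ℕ}
    (S : Fin m → Finset α) (x : Fin m → ℝ) (R : Finset α) :
    ∑ e ∈ R, ∑ i ∈ Finset.univ.filter (fun i => e ∈ S i), x i
      = ∑ i : Fin m, ((S i ∩ R).card : ℝ) * x i := by
  simp only [Finset.sum_filter]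
  rw [Finset.sum_comm]
  refine Finset.sum_congr rfl fun i _ => ?_
  rw [← Finset.sum_filter]
  have h : R.filter (fun e => e ∈ S i) = S i ∩ R := by
    ext e; simp [Finset.mem_inter, and_comm]
  rw [h, Finset.sum_const, nsmul_eq_mul]

set_option maxHeartbeats 2000000 in
lemma psc_greedy {α : Type*} [Fintype α] [DecidableEq α] {m : ℕ}
    (S : Fin m → Finset α) (w x : Fin m → ℝ) (z : α → ℝ)
    (c B W : ℝ) (hc : 1 < c) (hB : 0 < B)
    (hwnn : ∀ i, 0 ≤ w i) (hxnn : ∀ i, 0 ≤ x i)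
    (hWub : ∀ i, w i ≤ W) (hWnn : 0 ≤ W)
    (hBub : ∑ i, w i * x i ≤ B) :
    ∀ d : ℕ, ∀ R : Finset α, ∀ V b : ℝ,
      0 ≤ V → 0 ≤ b →
      V ≤ ∑ e ∈ R, z e →
      (∀ e ∈ R, 0 ≤ z e) →
      (∀ e ∈ R, c * z e ≤ 1) →
      (∀ e ∈ R, z e ≤ ∑ i ∈ Finset.univ.filter (fun i => e ∈ S i), x i) →
      (∀ e ∈ R, ∀ i, e ∈ S i → 0 < w i) →
      ((d : ℝ) ≤ c * V * (1 - Real.exp (-(b / (c * B))))) →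
      ∃ T : Finset (Fin m), d ≤ ((T.biUnion S) ∩ R).card ∧ ∑ i ∈ T, w i ≤ b + W := by
  intro d
  induction d using Nat.strong_induction_on with
  | _ d ih =>
  intro R V b hV hb hVZ hznn hzc hzcov hwpos hinv
  rcases Nat.eq_zero_or_pos d with hd0 | hd1
  · subst hd0
    exact ⟨∅, Nat.zero_le _, by simp; linarith⟩
  have hc0 : (0:ℝ) < c := lt_trans zero_lt_one hc
  have hcne : c ≠ 0 := hc0.ne'
  have hBne : B ≠ 0 := hB.ne'
  have hcB : 0 < c * B := mul_pos hc0 hB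
  set E := Real.exp (-(b / (c * B))) with hEdef
  clear_value E
  have hE0 : 0 < E := by rw [hEdef]; exact Real.exp_pos _
  have hE1 : E ≤ 1 := by
    rw [hEdef]
    calc Real.exp (-(b / (c * B))) ≤ Real.exp 0 := by
          apply Real.exp_le_exp.mpr
          have : 0 ≤ b / (c * B) := div_nonneg hb hcB.le
          linarith
      _ = 1 := Real.exp_zero
  have hd1R : (1:ℝ) ≤ (d:ℝ) := by exact_mod_cast hd1
  have hVpos : 0 < V := by
    rcases hV.lt_or_eq with h | h
    · exact h
    · exfalso; rw [← h] at hinv; simp at hinv; linarith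
  have hZpos : 0 < ∑ e ∈ R, z e := lt_of_lt_of_le hVpos hVZ
  -- find a witness element and set
  have hex : ∃ e ∈ R, 0 < z e := by
    by_contra h; push_neg at h
    have : ∑ e ∈ R, z e ≤ 0 := Finset.sum_nonpos (fun e he => h e he)
    linarith
  obtain ⟨e0, he0R, he0z⟩ := hex
  have hxsum : 0 < ∑ i ∈ Finset.univ.filter (fun i => e0 ∈ S i), x i :=
    lt_of_lt_of_le he0z (hzcov e0 he0R)
  have hex2 : ∃ i ∈ Finset.univ.filter (fun i => e0 ∈ S i), 0 < x i := by
    by_contra h; push_neg at h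
    have : ∑ i ∈ Finset.univ.filter (fun i => e0 ∈ S i), x i ≤ 0 :=
      Finset.sum_nonpos h
    linarith
  obtain ⟨i0, hi0mem, hi0x⟩ := hex2
  have hi0S : e0 ∈ S i0 := (Finset.mem_filter.1 hi0mem).2
  have hi0w : 0 < w i0 := hwpos e0 he0R i0 hi0S
  have hi0g : e0 ∈ S i0 ∩ R := Finset.mem_inter.2 ⟨hi0S, he0R⟩
  -- existence of a good set
  have hgood : ∃ i, 0 < w i ∧ 0 < (S i ∩ R).card ∧
      w i * (∑ e ∈ R, z e) ≤ ((S i ∩ R).card : ℝ) * B := by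
    by_contra h; push_neg at h
    have key : ∑ e ∈ R, z e ≤ ∑ i : Fin m, ((S i ∩ R).card : ℝ) * x i := by
      rw [← psc_double_count']
      exact Finset.sum_le_sum (fun e he => hzcov e he)
    have hlt : ∑ i : Fin m, (((S i ∩ R).card : ℝ) * x i) * B
        < ∑ i : Fin m, (w i * x i) * (∑ e ∈ R, z e) := by
      apply Finset.sum_lt_sum
      · intro i _
        rcases (hwnn i).lt_or_eq with hwi | hwi
        · rcases Nat.eq_zero_or_pos (S i ∩ R).card with h0 | h0
          · rw [h0]
            have h9 := mul_nonneg (mul_nonneg (hwnn i) (hxnn i)) hZpos.le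
            push_cast
            nlinarith
          · have hh := h i hwi h0
            have := mul_le_mul_of_nonneg_left hh.le (hxnn i)
            nlinarith
        · have hempty : S i ∩ R = ∅ := by
            by_contra hne
            obtain ⟨e, he⟩ := Finset.nonempty_iff_ne_empty.2 hne
            have := hwpos e (Finset.mem_inter.1 he).2 i (Finset.mem_inter.1 he).1
            linarith
          rw [hempty, ← hwi]; simp
      · refine ⟨i0, Finset.mem_univ i0, ?_⟩
        have h0 : 0 < (S i0 ∩ R).card := Finset.card_pos.2 ⟨e0, hi0g⟩
        have hh := h i0 hi0w h0
        nlinarith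
    have h1 : (∑ e ∈ R, z e) * B ≤ ∑ i : Fin m, (((S i ∩ R).card : ℝ) * x i) * B := by
      rw [← Finset.sum_mul]
      exact mul_le_mul_of_nonneg_right key hB.le
    have h2 : ∑ i : Fin m, (w i * x i) * (∑ e ∈ R, z e) ≤ B * (∑ e ∈ R, z e) := by
      rw [← Finset.sum_mul]
      exact mul_le_mul_of_nonneg_right hBub hZpos.le
    nlinarith [h1, h2, hlt]
  obtain ⟨i, hwi, hgpos, hkey⟩ := hgood
  set g := (S i ∩ R).card with hgdef
  clear_value g
  by_cases hdg : d ≤ g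
  · refine ⟨{i}, ?_, ?_⟩
    · rw [Finset.singleton_biUnion]
      exact hgdef ▸ hdg
    · rw [Finset.sum_singleton]
      have := hWub i
      linarith
  push_neg at hdg
  have hgd : g < d := hdg
  have hwV : w i * V ≤ (g : ℝ) * B := by
    have h1 : w i * V ≤ w i * (∑ e ∈ R, z e) := mul_le_mul_of_nonneg_left hVZ hwi.le
    exact le_trans h1 hkey
  have hEmb : 1 - E ≤ b / (c * B) := by
    have := Real.add_one_le_exp (-(b / (c * B)))
    rw [hEdef]; linarith
  have hwb : w i ≤ b := by
    by_contra hbw; push_neg at hbw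
    have h1 : (d:ℝ) ≤ V * b / B := by
      have hstep : c * V * (1 - E) ≤ c * V * (b / (c * B)) :=
        mul_le_mul_of_nonneg_left hEmb (by positivity)
      have heq : c * V * (b / (c * B)) = V * b / B := by
        field_simp
      linarith [hinv]
    have h2 : V * b / B < V * w i / B := by gcongr
    have h3 : V * w i / B ≤ (g : ℝ) := by
      rw [div_le_iff₀ hB]; nlinarith [hwV]
    have h4 : (g:ℝ) < (d:ℝ) := by exact_mod_cast hgd
    linarith
  -- recursion setup
  have hgpos' : 0 < g := hgpos
  set d' := d - g with hd'def
  clear_value d'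
  have hd'lt : d' < d := by rw [hd'def]; exact Nat.sub_lt hd1 hgpos'
  have hcastd' : (d' : ℝ) = (d:ℝ) - (g:ℝ) := by
    rw [hd'def, Nat.cast_sub hgd.le]
  set R' := R \ S i with hR'def
  clear_value R'
  have hR'sub : R' ⊆ R := by rw [hR'def]; exact Finset.sdiff_subset
  set V' := V - (g:ℝ) / c with hV'def
  clear_value V'
  set b' := b - w i with hb'def
  clear_value b'
  have hgle : (g:ℝ) + 1 ≤ (d:ℝ) := by exact_mod_cast Nat.succ_le_of_lt hgd
  have hdcV : (d:ℝ) ≤ c * V := by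
    have hcv : 0 ≤ c * V := mul_nonneg hc0.le hV
    have h5 : c * V * (1 - E) ≤ c * V * 1 := by
      apply mul_le_mul_of_nonneg_left _ hcv
      linarith
    rw [mul_one] at h5
    linarith [hinv]
  have hV'pos : 0 < V' := by
    have hgc : (g:ℝ) < c * V := by linarith
    have h2 : (g:ℝ) / c < V := by
      rw [div_lt_iff₀ hc0]
      nlinarith
    rw [hV'def]; linarith
  have hb'nn : 0 ≤ b' := by rw [hb'def]; linarith
  -- potential on R'
  have hZR' : V' ≤ ∑ e ∈ R', z e := by
    have hsubiR : S i ∩ R ⊆ R := Finset.inter_subset_right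
    have hRR : R' = R \ (S i ∩ R) := by
      rw [hR'def, Finset.inter_comm, Finset.sdiff_inter_self_left]
    have hsplit : ∑ e ∈ R', z e = (∑ e ∈ R, z e) - ∑ e ∈ S i ∩ R, z e := by
      rw [hRR, Finset.sum_sdiff_eq_sub hsubiR]
    have hcap : ∑ e ∈ S i ∩ R, z e ≤ (g:ℝ) * (1/c) := by
      have h := Finset.sum_le_card_nsmul (S i ∩ R) z (1/c)
        (fun e he => by
          have hz1 := hzc e (Finset.mem_inter.1 he).2
          rw [le_div_iff₀ hc0]; linarith [mul_comm (z e) c])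
      rw [nsmul_eq_mul] at h
      rw [hgdef]
      exact h
    have hgc' : (g:ℝ) * (1/c) = (g:ℝ) / c := by ring
    rw [hV'def]; linarith [hsplit, hcap, hVZ]
  -- invariant preservation
  have hEdef2 : Real.exp (-(b' / (c * B))) = E * Real.exp (w i / (c * B)) := by
    rw [hEdef, ← Real.exp_add, hb'def]
    congr 1
    ring
  set s := w i / (c * B) with hsdef
  clear_value s
  have hs0 : 0 ≤ s := by rw [hsdef]; positivity
  have hexp_s : Real.exp s - 1 ≤ s * Real.exp s := by
    have h := Real.add_one_le_exp (-s)
    have h2 : Real.exp (-s) * Real.exp s = 1 := by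
      rw [← Real.exp_add]; simp
    nlinarith [Real.exp_pos s]
  have hgwV : c * s * V ≤ (g:ℝ) := by
    have hcs : c * s = w i / B := by
      rw [hsdef]; field_simp
    rw [hcs, div_mul_eq_mul_div, div_le_iff₀ hB]
    nlinarith [hwV]
  have hinv' : (d' : ℝ) ≤ c * V' * (1 - Real.exp (-(b' / (c * B)))) := by
    rw [hcastd', hEdef2]
    have hexpand : c * V' = c * V - (g:ℝ) := by
      rw [hV'def]; field_simp
    rw [hexpand]
    have t1 : 0 ≤ c * V * (1 - E) - (d:ℝ) := by linarith [hinv]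
    have t2 : 0 ≤ ((g:ℝ) - c * s * V) * (E * Real.exp s) :=
      mul_nonneg (by linarith [hgwV]) (mul_nonneg hE0.le (Real.exp_pos s).le)
    have t3 : 0 ≤ (c * V * E) * (s * Real.exp s - (Real.exp s - 1)) :=
      mul_nonneg (mul_nonneg (mul_nonneg hc0.le hVpos.le) hE0.le) (by linarith [hexp_s])
    nlinarith [t1, t2, t3]
  obtain ⟨T', hT'cov, hT'cost⟩ := ih d' hd'lt R' V' b' hV'pos.le hb'nn hZR'
    (fun e he => hznn e (hR'sub he))
    (fun e he => hzc e (hR'sub he))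
    (fun e he => hzcov e (hR'sub he))
    (fun e he => hwpos e (hR'sub he))
    hinv'
  refine ⟨insert i T', ?_, ?_⟩
  · have hXY : (S i ∩ R) ∪ ((T'.biUnion S) ∩ R') ⊆ ((insert i T').biUnion S) ∩ R := by
      apply Finset.union_subset
      · intro e he
        obtain ⟨heS, heR⟩ := Finset.mem_inter.1 he
        exact Finset.mem_inter.2 ⟨Finset.mem_biUnion.2 ⟨i, Finset.mem_insert_self i T', heS⟩, heR⟩
      · intro e he
        obtain ⟨heB, heR'⟩ := Finset.mem_inter.1 he
        obtain ⟨j, hjT, hjS⟩ := Finset.mem_biUnion.1 heB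
        exact Finset.mem_inter.2 ⟨Finset.mem_biUnion.2 ⟨j, Finset.mem_insert_of_mem hjT, hjS⟩,
          hR'sub heR'⟩
    have hdisj : Disjoint (S i ∩ R) ((T'.biUnion S) ∩ R') := by
      rw [Finset.disjoint_left]
      intro e he1 he2
      have heS : e ∈ S i := (Finset.mem_inter.1 he1).1
      have heR' : e ∈ R' := (Finset.mem_inter.1 he2).2
      rw [hR'def] at heR'
      exact (Finset.mem_sdiff.1 heR').2 heS
    calc d ≤ g + d' := by omega
      _ = (S i ∩ R).card + d' := by rw [hgdef]
      _ ≤ (S i ∩ R).card + ((T'.biUnion S) ∩ R').card := add_le_add le_rfl hT'cov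
      _ = ((S i ∩ R) ∪ ((T'.biUnion S) ∩ R')).card := (Finset.card_union_of_disjoint hdisj).symm
      _ ≤ _ := Finset.card_le_card hXY
  · have hins : ∑ j ∈ insert i T', w j ≤ w i + ∑ j ∈ T', w j := by
      by_cases hiT : i ∈ T'
      · rw [Finset.insert_eq_self.2 hiT]; linarith [hwi.le]
      · rw [Finset.sum_insert hiT]
    rw [hb'def] at hT'cost
    linarith
set_option maxHeartbeats 2000000 in
/-- Partial set cover rounding guarantee: given a deletion-closed
integrality-gap hypothesis with factor `β` for the set-cover LP, any feasible solution
`(x, z)` of PSC-LP with requirement `k` can be rounded to an integral collection `T`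
covering at least `k` elements of cost at most `(e/(e-1))(β+1)·(LP cost) + W`,
where `W = max_i w_i`. -/
theorem partial_set_cover_rounding
    {α : Type*} [Fintype α] [DecidableEq α] {m : ℕ}
    (S : Fin m → Finset α) (w : Fin m → ℝ) (hw : ∀ i, 0 ≤ w i)
    (k : ℕ) (β : ℝ) (hβ : 1 ≤ β)
    (hgap : ∀ (U' : Finset α) (x : Fin m → ℝ),
      (∀ i, x i ∈ Set.Icc (0:ℝ) 1) →
      (∀ e ∈ U', 1 ≤ ∑ i ∈ Finset.univ.filter (fun i => e ∈ S i), x i) →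
      ∃ T : Finset (Fin m), U' ⊆ T.biUnion S ∧
        ∑ i ∈ T, w i ≤ β * ∑ i, w i * x i)
    (x : Fin m → ℝ) (z : α → ℝ)
    (hx : ∀ i, 0 ≤ x i) (hz : ∀ e, z e ∈ Set.Icc (0:ℝ) 1)
    (hcov : ∀ e, z e ≤ ∑ i ∈ Finset.univ.filter (fun i => e ∈ S i), x i)
    (htot : (k : ℝ) ≤ ∑ e, z e)
    (W : ℝ) (hW : IsGreatest (Set.range w) W) :
    ∃ T : Finset (Fin m), k ≤ (T.biUnion S).card ∧
      ∑ i ∈ T, w i ≤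
        (Real.exp 1 / (Real.exp 1 - 1)) * (β + 1) * (∑ i, w i * x i) + W := by
  classical
  obtain ⟨i₀, hi₀⟩ := hW.1
  have hWnn : 0 ≤ W := hi₀ ▸ hw i₀
  have hWub : ∀ i, w i ≤ W := fun i => hW.2 ⟨i, rfl⟩
  set e1 := Real.exp 1 with he1def
  have he1two : 2 ≤ e1 := by
    have := Real.add_one_le_exp 1
    rw [he1def]; linarith
  have he1pos : 0 < e1 := by rw [he1def]; exact Real.exp_pos 1
  have hem1 : 0 < e1 - 1 := by linarith
  set c := e1 / (e1 - 1) with hcdef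
  have hc1 : 1 < c := by
    rw [hcdef, lt_div_iff₀ hem1]; linarith
  have hc0 : 0 < c := lt_trans one_pos hc1
  set B := ∑ i, w i * x i with hBdef
  have hBnn : 0 ≤ B := Finset.sum_nonneg (fun i _ => mul_nonneg (hw i) (hx i))
  -- Stage 1: cover elements with high fractional coverage via the gap hypothesis
  set x' : Fin m → ℝ := fun i => min 1 (c * x i) with hx'def
  have hx'Icc : ∀ i, x' i ∈ Set.Icc (0:ℝ) 1 := fun i =>
    ⟨le_min zero_le_one (mul_nonneg hc0.le (hx i)), min_le_left _ _⟩
  set H := Finset.univ.filter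
    (fun e => 1 ≤ c * ∑ i ∈ Finset.univ.filter (fun i => e ∈ S i), x i) with hHdef
  have hHcov : ∀ e ∈ H, 1 ≤ ∑ i ∈ Finset.univ.filter (fun i => e ∈ S i), x' i := by
    intro e he
    rw [hHdef, Finset.mem_filter] at he
    have h1 : min 1 (∑ i ∈ Finset.univ.filter (fun i => e ∈ S i), c * x i)
        ≤ ∑ i ∈ Finset.univ.filter (fun i => e ∈ S i), min 1 (c * x i) :=
      psc_min_one_sum _ _ (fun i _ => mul_nonneg hc0.le (hx i))
    rw [← Finset.mul_sum] at h1
    rw [min_eq_left he.2] at h1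
    exact h1
  obtain ⟨T₁, hT₁cov, hT₁cost⟩ := hgap H x' hx'Icc hHcov
  have hT₁cost' : ∑ i ∈ T₁, w i ≤ c * β * B := by
    have h1 : ∑ i, w i * x' i ≤ c * B := by
      rw [hBdef, Finset.mul_sum]
      apply Finset.sum_le_sum
      intro i _
      calc w i * x' i ≤ w i * (c * x i) :=
            mul_le_mul_of_nonneg_left (min_le_right _ _) (hw i)
        _ = c * (w i * x i) := by ring
    calc ∑ i ∈ T₁, w i ≤ β * ∑ i, w i * x' i := hT₁cost
      _ ≤ β * (c * B) := mul_le_mul_of_nonneg_left h1 (by linarith)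
      _ = c * β * B := by ring
  set T₀ := Finset.univ.filter (fun i => w i ≤ 0) with hT₀def
  have hT₀cost : ∑ i ∈ T₀, w i ≤ 0 :=
    Finset.sum_nonpos (fun i hi => (Finset.mem_filter.1 hi).2)
  set A := (T₁ ∪ T₀).biUnion S with hAdef
  set R := Finset.univ \ A with hRdef
  -- properties of R
  have hRnA : ∀ e ∈ R, e ∉ A := by
    intro e he; rw [hRdef, Finset.mem_sdiff] at he; exact he.2
  have hRz1 : ∀ e ∈ R, c * z e ≤ 1 := by
    intro e he
    have heA := hRnA e he
    have heH : e ∉ H := by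
      intro hH
      apply heA
      have h1 := hT₁cov hH
      rw [hAdef]
      obtain ⟨j, hj, hjS⟩ := Finset.mem_biUnion.1 h1
      exact Finset.mem_biUnion.2 ⟨j, Finset.mem_union_left _ hj, hjS⟩
    rw [hHdef, Finset.mem_filter] at heH
    push_neg at heH
    have h2 := heH (Finset.mem_univ e)
    have h3 := hcov e
    nlinarith [mul_le_mul_of_nonneg_left h3 hc0.le]
  have hRw : ∀ e ∈ R, ∀ i, e ∈ S i → 0 < w i := by
    intro e he i hi
    by_contra h; push_neg at h
    apply hRnA e he
    rw [hAdef]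
    exact Finset.mem_biUnion.2 ⟨i, Finset.mem_union_right _
      (Finset.mem_filter.2 ⟨Finset.mem_univ i, h⟩), hi⟩
  have hzRnn : ∀ e ∈ R, 0 ≤ z e := fun e _ => (hz e).1
  have hZR : (k:ℝ) - A.card ≤ ∑ e ∈ R, z e := by
    have hsplit : ∑ e ∈ R, z e = (∑ e : α, z e) - ∑ e ∈ A, z e := by
      rw [hRdef, Finset.sum_sdiff_eq_sub (Finset.subset_univ A)]
    have hAz : ∑ e ∈ A, z e ≤ (A.card : ℝ) := by
      have h := Finset.sum_le_card_nsmul A z 1 (fun e _ => (hz e).2)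
      rw [nsmul_eq_mul, mul_one] at h
      exact h
    linarith [htot]
  by_cases hkA : k ≤ A.card
  · refine ⟨T₁ ∪ T₀, ?_, ?_⟩
    · rw [← hAdef]; exact hkA
    · have hsum : ∑ i ∈ T₁ ∪ T₀, w i ≤ ∑ i ∈ T₁, w i + ∑ i ∈ T₀, w i := by
        have h := Finset.sum_union_inter (s₁ := T₁) (s₂ := T₀) (f := w)
        have h2 : 0 ≤ ∑ i ∈ T₁ ∩ T₀, w i := Finset.sum_nonneg fun i _ => hw i
        linarith
      have hcB : 0 ≤ c * B := mul_nonneg hc0.le hBnn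
      nlinarith [hT₁cost', hT₀cost]
  · push_neg at hkA
    set d := k - A.card with hddef
    have hd1 : 1 ≤ d := by omega
    have hdcast : (d:ℝ) = (k:ℝ) - (A.card : ℝ) := by
      rw [hddef, Nat.cast_sub hkA.le]
    have hBpos : 0 < B := by
      rcases hBnn.lt_or_eq with h | h
      · exact h
      · exfalso
        have hzero : ∀ e ∈ R, z e = 0 := by
          intro e he
          by_contra hz0
          have hzpos : 0 < z e := ((hzRnn e he).lt_of_ne (Ne.symm hz0))
          have hxpos : 0 < ∑ i ∈ Finset.univ.filter (fun i => e ∈ S i), x i :=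
            lt_of_lt_of_le hzpos (hcov e)
          have hex : ∃ i ∈ Finset.univ.filter (fun i => e ∈ S i), 0 < x i := by
            by_contra hno; push_neg at hno
            have := Finset.sum_nonpos hno
            linarith
          obtain ⟨i, hiF, hxi⟩ := hex
          have hiS : e ∈ S i := (Finset.mem_filter.1 hiF).2
          have hwi := hRw e he i hiS
          have hterm : w i * x i = 0 :=
            (Finset.sum_eq_zero_iff_of_nonneg
              (fun j _ => mul_nonneg (hw j) (hx j))).1 h.symm i (Finset.mem_univ i)
          nlinarith
        have hzsum : ∑ e ∈ R, z e = 0 := Finset.sum_eq_zero hzero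
        rw [hzsum] at hZR
        have : (k:ℝ) ≤ (A.card : ℝ) := by linarith
        have : k ≤ A.card := by exact_mod_cast this
        omega
    have hinv0 : (d:ℝ) ≤ c * (d:ℝ) * (1 - Real.exp (-((c*B) / (c*B)))) := by
      rw [div_self (ne_of_gt (mul_pos hc0 hBpos))]
      have hE : Real.exp (-(1:ℝ)) = 1 / e1 := by
        rw [Real.exp_neg, he1def]
        simp [one_div]
      rw [hE]
      have hc1e : c * (1 - 1/e1) = 1 := by
        rw [hcdef]
        field_simp
      have heq : c * (d:ℝ) * (1 - 1/e1) = (c * (1 - 1/e1)) * (d:ℝ) := by ring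
      rw [heq, hc1e, one_mul]
    obtain ⟨T₂, hT₂cov, hT₂cost⟩ := psc_greedy S w x z c B W hc1 hBpos hw hx hWub hWnn
      (le_of_eq hBdef.symm) d R (d:ℝ) (c*B)
      (Nat.cast_nonneg d) (mul_nonneg hc0.le hBnn)
      (by rw [hdcast]; exact hZR) hzRnn hRz1 (fun e _ => hcov e) hRw hinv0
    refine ⟨(T₁ ∪ T₀) ∪ T₂, ?_, ?_⟩
    · have hsub2 : A ∪ ((T₂.biUnion S) ∩ R) ⊆ ((T₁ ∪ T₀) ∪ T₂).biUnion S := by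
        apply Finset.union_subset
        · rw [hAdef]
          exact Finset.biUnion_subset_biUnion_of_subset_left S Finset.subset_union_left
        · exact subset_trans Finset.inter_subset_left
            (Finset.biUnion_subset_biUnion_of_subset_left S Finset.subset_union_right)
      have hdisj : Disjoint A ((T₂.biUnion S) ∩ R) := by
        rw [Finset.disjoint_left]
        intro e he1 he2
        exact hRnA e (Finset.mem_inter.1 he2).2 he1
      calc k ≤ A.card + d := by omega
        _ ≤ A.card + ((T₂.biUnion S) ∩ R).card := add_le_add le_rfl hT₂cov
        _ = (A ∪ ((T₂.biUnion S) ∩ R)).card := (Finset.card_union_of_disjoint hdisj).symm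
        _ ≤ _ := Finset.card_le_card hsub2
    · have h1 : ∑ i ∈ (T₁ ∪ T₀) ∪ T₂, w i ≤ (∑ i ∈ T₁ ∪ T₀, w i) + ∑ i ∈ T₂, w i := by
        have h := Finset.sum_union_inter (s₁ := T₁ ∪ T₀) (s₂ := T₂) (f := w)
        have h2 : 0 ≤ ∑ i ∈ (T₁ ∪ T₀) ∩ T₂, w i := Finset.sum_nonneg fun i _ => hw i
        linarith
      have h2 : ∑ i ∈ T₁ ∪ T₀, w i ≤ ∑ i ∈ T₁, w i + ∑ i ∈ T₀, w i := by
        have h := Finset.sum_union_inter (s₁ := T₁) (s₂ := T₀) (f := w)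
        have h3 : 0 ≤ ∑ i ∈ T₁ ∩ T₀, w i := Finset.sum_nonneg fun i _ => hw i
        linarith
      have hring : c * (β + 1) * B = c * β * B + c * B := by ring
      linarith [hT₁cost', hT₀cost, hT₂cost]
end

section
/- Let (U, S_1, ..., S_m) be a finite set system with set weights w_i ≥ 0, let k be an integer, and let 0 < τ ≤ 1 - 1/e. Let (x, z) satisfy x_i ≥ 0, z_j ∈ [0,1], Σ_{i : e_j ∈ S_i} x_i ≥ z_j for every e_j ∈ U, and Σ_{e_j ∈ U} z_j ≥ k. Let U_ℓ = { e_j ∈ U : z_j < τ } and k' = k - |U \ U_ℓ|. Then there exists T ⊆ {1,...,m} such that |(∪_{i∈T} S_i) ∩ U_ℓ| ≥ k' and Σ_{i∈T} w_i ≤ max_i w_i + (1/τ)·Σ_i w_i x_i. -/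
set_option maxHeartbeats 1600000


open Finset

/-- Covering the shallow elements: given a feasible PSC-LP solution
`(x, z)` and `0 < τ ≤ 1 - 1/e`, with `U_ℓ = {e : z e < τ}` and
`k' = k - |U \ U_ℓ|`, there is a collection `T` covering at least `k'` elements
from `U_ℓ` of weight at most `max_i w_i + (1/τ)·Σ_i w_i x_i`. -/
theorem cover_shallow_elements
    {α : Type*} [Fintype α] [DecidableEq α] {m : ℕ}
    (S : Fin m → Finset α) (w : Fin m → ℝ) (hw : ∀ i, 0 ≤ w i)
    (k : ℕ) (τ : ℝ) (hτ0 : 0 < τ) (hτ1 : τ ≤ 1 - 1 / Real.exp 1)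
    (x : Fin m → ℝ) (z : α → ℝ)
    (hx : ∀ i, 0 ≤ x i) (hz : ∀ e, z e ∈ Set.Icc (0:ℝ) 1)
    (hcov : ∀ e, z e ≤ ∑ i ∈ Finset.univ.filter (fun i => e ∈ S i), x i)
    (htot : (k : ℝ) ≤ ∑ e, z e)
    (W : ℝ) (hW : IsGreatest (Set.range w) W) :
    ∃ T : Finset (Fin m),
      (k : ℝ) - ((Finset.univ.filter (fun e => ¬ z e < τ)).card : ℝ) ≤
        ((T.biUnion S ∩ Finset.univ.filter (fun e => z e < τ)).card : ℝ) ∧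
      ∑ i ∈ T, w i ≤ W + (1 / τ) * ∑ i, w i * x i := by
  classical
  obtain ⟨iW, hiW⟩ := hW.1
  have hWmax : ∀ i, w i ≤ W := fun i => hW.2 ⟨i, rfl⟩
  have hW0 : 0 ≤ W := hiW ▸ hw iW
  set Ul : Finset α := Finset.univ.filter (fun e => z e < τ) with hUldef
  set Dset : Finset α := Finset.univ.filter (fun e => ¬ z e < τ) with hDdef
  set A : ℝ := ∑ i, w i * x i with hAdef
  set K : ℝ := (k : ℝ) - (Dset.card : ℝ) with hKdef
  have hA0 : 0 ≤ A := Finset.sum_nonneg fun i _ => mul_nonneg (hw i) (hx i)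
  have he : (0:ℝ) < 1 / Real.exp 1 := by positivity
  have hτlt1 : τ < 1 := by linarith
  have h1τ : 0 < 1 - τ := by linarith
  -- total z-mass on shallow elements is at least K
  have hKsum : K ≤ ∑ e ∈ Ul, z e := by
    have hsplit : ∑ e ∈ Ul, z e + ∑ e ∈ Dset, z e = ∑ e, z e :=
      Finset.sum_filter_add_sum_filter_not Finset.univ _ z
    have hDz : ∑ e ∈ Dset, z e ≤ (Dset.card : ℝ) := by
      calc ∑ e ∈ Dset, z e ≤ ∑ _e ∈ Dset, (1:ℝ) :=
            Finset.sum_le_sum fun e _ => (hz e).2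
        _ = (Dset.card : ℝ) := by simp
    rw [hKdef]; linarith
  -- Main greedy induction
  have key : ∀ n : ℕ, ∀ T : Finset (Fin m),
      (Ul \ (T.biUnion S ∩ Ul)).card ≤ n →
      ((T.biUnion S ∩ Ul).card : ℝ) < K →
      ∃ T' : Finset (Fin m), T ⊆ T' ∧ K ≤ ((T'.biUnion S ∩ Ul).card : ℝ) ∧
        ∑ i ∈ T', w i ≤ ∑ i ∈ T, w i + W +
          (A / τ) * (Real.log (K - τ * ((T.biUnion S ∩ Ul).card : ℝ))
            - Real.log (K * (1 - τ))) := by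
    intro n
    induction n with
    | zero =>
      intro T hcard hlt
      exfalso
      set cov := T.biUnion S ∩ Ul with hcovdef
      have hcovsub : cov ⊆ Ul := Finset.inter_subset_right
      have hc0 : (0:ℝ) ≤ (cov.card : ℝ) := Nat.cast_nonneg _
      have hβpos : 0 < K - τ * (cov.card : ℝ) := by nlinarith
      have hR : Ul \ cov = ∅ := Finset.card_eq_zero.mp (Nat.le_zero.mp hcard)
      have hsum : ∑ e ∈ Ul \ cov, z e + ∑ e ∈ cov, z e = ∑ e ∈ Ul, z e :=
        Finset.sum_sdiff hcovsub
      have hcovz : ∑ e ∈ cov, z e ≤ τ * (cov.card : ℝ) := by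
        calc ∑ e ∈ cov, z e ≤ ∑ _e ∈ cov, τ :=
              Finset.sum_le_sum fun e he =>
                le_of_lt (Finset.mem_filter.mp (hcovsub he)).2
          _ = τ * (cov.card : ℝ) := by rw [Finset.sum_const, nsmul_eq_mul, mul_comm]
      rw [hR, Finset.sum_empty] at hsum
      linarith
    | succ n ih =>
      intro T hcard hlt
      set cov := T.biUnion S ∩ Ul with hcovdef
      set R := Ul \ cov with hRdef
      set c : ℝ := (cov.card : ℝ) with hcdef
      set β : ℝ := K - τ * c with hβdef
      have hcovsub : cov ⊆ Ul := Finset.inter_subset_right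
      have hc0 : (0:ℝ) ≤ c := Nat.cast_nonneg _
      have hβpos : 0 < β := by rw [hβdef]; nlinarith
      -- lower bound on uncovered z-mass
      have hRz : β ≤ ∑ e ∈ R, z e := by
        have hsum : ∑ e ∈ R, z e + ∑ e ∈ cov, z e = ∑ e ∈ Ul, z e :=
          Finset.sum_sdiff hcovsub
        have hcovz : ∑ e ∈ cov, z e ≤ τ * c := by
          calc ∑ e ∈ cov, z e ≤ ∑ _e ∈ cov, τ :=
                Finset.sum_le_sum fun e he =>
                  le_of_lt (Finset.mem_filter.mp (hcovsub he)).2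
            _ = τ * c := by rw [hcdef, Finset.sum_const, nsmul_eq_mul, mul_comm]
        rw [hβdef]; linarith
      -- uncovered z-mass is fractionally covered
      have hxn : ∑ e ∈ R, z e ≤ ∑ i, x i * (((S i ∩ R).card : ℝ)) := by
        calc ∑ e ∈ R, z e
            ≤ ∑ e ∈ R, ∑ i ∈ Finset.univ.filter (fun i => e ∈ S i), x i :=
              Finset.sum_le_sum fun e _ => hcov e
          _ = ∑ e ∈ R, ∑ i : Fin m, if e ∈ S i then x i else 0 := by
              refine Finset.sum_congr rfl fun e _ => ?_
              rw [Finset.sum_filter]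
          _ = ∑ i : Fin m, ∑ e ∈ R, if e ∈ S i then x i else 0 := Finset.sum_comm
          _ = ∑ i, x i * (((S i ∩ R).card : ℝ)) := by
              refine Finset.sum_congr rfl fun i _ => ?_
              rw [← Finset.sum_filter, Finset.filter_mem_eq_inter, Finset.sum_const,
                Finset.inter_comm, nsmul_eq_mul, mul_comm]
      have hβle : β ≤ ∑ i, x i * (((S i ∩ R).card : ℝ)) := le_trans hRz hxn
      -- greedy step: a dense set exists
      have hstep : ∃ i, 0 < ((S i ∩ R).card : ℝ) ∧
          w i * β ≤ A * ((S i ∩ R).card : ℝ) := by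
        by_contra hcon
        push_neg at hcon
        have hterm : ∀ i ∈ Finset.univ (α := Fin m),
            x i * (A * ((S i ∩ R).card : ℝ)) ≤ x i * (w i * β) := by
          intro i _
          rcases eq_or_lt_of_le (Nat.cast_nonneg (S i ∩ R).card : (0:ℝ) ≤ _)
            with h0 | h0
          · rw [← h0, mul_zero, mul_zero]
            exact mul_nonneg (hx i) (mul_nonneg (hw i) hβpos.le)
          · exact mul_le_mul_of_nonneg_left (le_of_lt (hcon i h0)) (hx i)
        have hex : ∃ i, 0 < x i * (((S i ∩ R).card : ℝ)) := by
          by_contra hne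
          push_neg at hne
          have : ∑ i, x i * (((S i ∩ R).card : ℝ)) ≤ 0 :=
            Finset.sum_nonpos fun i _ => hne i
          linarith
        obtain ⟨i₀, hi₀⟩ := hex
        have hn0 : (0:ℝ) ≤ ((S i₀ ∩ R).card : ℝ) := Nat.cast_nonneg _
        have hxi₀ : 0 < x i₀ := by
          rcases lt_or_ge 0 (x i₀) with h | h
          · exact h
          · exfalso; nlinarith
        have hni₀ : 0 < (((S i₀ ∩ R).card : ℝ)) := by
          rcases lt_or_ge 0 (((S i₀ ∩ R).card : ℝ)) with h | h
          · exact h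
          · exfalso; nlinarith
        have hstrict : x i₀ * (A * ((S i₀ ∩ R).card : ℝ)) < x i₀ * (w i₀ * β) :=
          mul_lt_mul_of_pos_left (hcon i₀ hni₀) hxi₀
        have hsumlt : ∑ i, x i * (A * ((S i ∩ R).card : ℝ)) <
            ∑ i, x i * (w i * β) :=
          Finset.sum_lt_sum hterm ⟨i₀, Finset.mem_univ _, hstrict⟩
        have e1 : ∑ i, x i * (A * ((S i ∩ R).card : ℝ)) =
            A * ∑ i, x i * (((S i ∩ R).card : ℝ)) := by
          rw [Finset.mul_sum]; exact Finset.sum_congr rfl fun i _ => by ring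
        have e2 : ∑ i, x i * (w i * β) = β * A := by
          rw [hAdef, Finset.mul_sum]; exact Finset.sum_congr rfl fun i _ => by ring
        have e3 : A * β ≤ A * ∑ i, x i * (((S i ∩ R).card : ℝ)) :=
          mul_le_mul_of_nonneg_left hβle hA0
        rw [e1, e2] at hsumlt
        nlinarith
      obtain ⟨i, hni, hwb⟩ := hstep
      have hmi : 0 < (S i ∩ R).card := by exact_mod_cast hni
      -- i is not already in T
      have hiT : i ∉ T := by
        intro hiT
        obtain ⟨e, he⟩ := Finset.card_pos.mp hmi
        rcases Finset.mem_inter.mp he with ⟨heS, heR⟩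
        rcases Finset.mem_sdiff.mp heR with ⟨heU, hec⟩
        exact hec (Finset.mem_inter.mpr ⟨Finset.mem_biUnion.mpr ⟨i, hiT, heS⟩, heU⟩)
      -- the new covered set
      have hcov' : (insert i T).biUnion S ∩ Ul = cov ∪ (S i ∩ R) := by
        ext e
        constructor
        · intro he
          rcases Finset.mem_inter.mp he with ⟨hb, heU⟩
          rcases Finset.mem_biUnion.mp hb with ⟨j, hjmem, hje⟩
          rcases Finset.mem_insert.mp hjmem with rfl | hjT
          · by_cases hc : e ∈ cov
            · exact Finset.mem_union_left _ hc
            · exact Finset.mem_union_right _ (Finset.mem_inter.mpr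
                ⟨hje, Finset.mem_sdiff.mpr ⟨heU, hc⟩⟩)
          · exact Finset.mem_union_left _ (Finset.mem_inter.mpr
              ⟨Finset.mem_biUnion.mpr ⟨j, hjT, hje⟩, heU⟩)
        · intro he
          rcases Finset.mem_union.mp he with hc | hnew
          · rcases Finset.mem_inter.mp hc with ⟨hb, heU⟩
            rcases Finset.mem_biUnion.mp hb with ⟨j, hjT, hje⟩
            exact Finset.mem_inter.mpr
              ⟨Finset.mem_biUnion.mpr ⟨j, Finset.mem_insert_of_mem hjT, hje⟩, heU⟩
          · rcases Finset.mem_inter.mp hnew with ⟨hje, hR⟩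
            exact Finset.mem_inter.mpr
              ⟨Finset.mem_biUnion.mpr ⟨i, Finset.mem_insert_self _ _, hje⟩,
                (Finset.mem_sdiff.mp hR).1⟩
      have hdisj : Disjoint cov (S i ∩ R) :=
        Finset.disjoint_right.mpr fun e he =>
          (Finset.mem_sdiff.mp (Finset.mem_inter.mp he).2).2
      have hcard' : ((insert i T).biUnion S ∩ Ul).card = cov.card + (S i ∩ R).card := by
        rw [hcov', Finset.card_union_of_disjoint hdisj]
      set mi : ℝ := ((S i ∩ R).card : ℝ) with hmidef
      have hwle : w i ≤ A * mi / β := (le_div_iff₀ hβpos).mpr hwb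
      by_cases hK' : K ≤ (((insert i T).biUnion S ∩ Ul).card : ℝ)
      · -- finished: last set charged to W
        refine ⟨insert i T, Finset.subset_insert _ _, hK', ?_⟩
        rw [Finset.sum_insert hiT]
        have hlognn : 0 ≤ (A / τ) * (Real.log β - Real.log (K * (1 - τ))) := by
          have hKpos : 0 < K := lt_of_le_of_lt hc0 hlt
          have hle : K * (1 - τ) ≤ β := by rw [hβdef]; nlinarith
          have hpos : 0 < K * (1 - τ) := mul_pos hKpos h1τ
          have hlog2 := Real.log_le_log hpos hle
          have hAτ : 0 ≤ A / τ := div_nonneg hA0 hτ0.le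
          exact mul_nonneg hAτ (by linarith)
        have := hWmax i
        linarith
      · -- recurse
        push_neg at hK'
        have hcardrec : (Ul \ ((insert i T).biUnion S ∩ Ul)).card ≤ n := by
          have h0' : (Ul \ cov).card ≤ n + 1 := by rw [← hRdef]; exact hcard
          have h1 : (Ul \ cov).card = Ul.card - cov.card := Finset.card_sdiff_of_subset hcovsub
          have h5 := hcard'
          have h6 := hmi
          have hsub' : (insert i T).biUnion S ∩ Ul ⊆ Ul := Finset.inter_subset_right
          have h2 : (Ul \ ((insert i T).biUnion S ∩ Ul)).card =
              Ul.card - ((insert i T).biUnion S ∩ Ul).card := Finset.card_sdiff_of_subset hsub'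
          have h3 : cov.card ≤ Ul.card := Finset.card_le_card hcovsub
          have h4 : ((insert i T).biUnion S ∩ Ul).card ≤ Ul.card :=
            Finset.card_le_card hsub'
          omega
        obtain ⟨T'', hsub, hge, hwt⟩ := ih (insert i T) hcardrec hK'
        refine ⟨T'', (Finset.subset_insert _ _).trans hsub, hge, ?_⟩
        rw [Finset.sum_insert hiT] at hwt
        set c' : ℝ := (((insert i T).biUnion S ∩ Ul).card : ℝ) with hc'def
        set β' : ℝ := K - τ * c' with hβ'def
        have hc'eq : c' = c + mi := by
          rw [hc'def, hcard', Nat.cast_add, ← hcdef, ← hmidef]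
        have hc'0 : (0:ℝ) ≤ c' := Nat.cast_nonneg _
        have hβ'pos : 0 < β' := by rw [hβ'def]; nlinarith
        have hββ' : β - β' = τ * mi := by rw [hβdef, hβ'def, hc'eq]; ring
        -- key log inequality
        have hlog : Real.log (β' / β) ≤ β' / β - 1 :=
          Real.log_le_sub_one_of_pos (div_pos hβ'pos hβpos)
        have hlogdiv : Real.log (β' / β) = Real.log β' - Real.log β :=
          Real.log_div hβ'pos.ne' hβpos.ne'
        have hfrac : (β - β') / β ≤ Real.log β - Real.log β' := by
          have h1 : β' / β - 1 = -((β - β') / β) := by field_simp; ring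
          rw [hlogdiv, h1] at hlog
          linarith
        have hAτ : 0 ≤ A / τ := div_nonneg hA0 hτ0.le
        have hkey : A * mi / β ≤ (A / τ) * (Real.log β - Real.log β') := by
          have h1 : (A / τ) * ((β - β') / β) ≤ (A / τ) * (Real.log β - Real.log β') :=
            mul_le_mul_of_nonneg_left hfrac hAτ
          have h2 : (A / τ) * ((β - β') / β) = A * mi / β := by
            rw [hββ']; field_simp
          linarith
        have hfin : w i ≤ (A / τ) * (Real.log β - Real.log β') :=
          le_trans hwle hkey
        linarith
  -- Assembly
  by_cases hK : K ≤ 0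
  · refine ⟨∅, ?_, ?_⟩
    · simpa using hK
    · have : (0:ℝ) ≤ W + (1 / τ) * A :=
        add_nonneg hW0 (mul_nonneg (by positivity) hA0)
      simpa using this
  · push_neg at hK
    have h0 : (((∅ : Finset (Fin m)).biUnion S ∩ Ul).card : ℝ) < K := by
      simpa using hK
    obtain ⟨T, _, hge, hwt⟩ := key (Ul \ ((∅ : Finset (Fin m)).biUnion S ∩ Ul)).card ∅
      le_rfl h0
    refine ⟨T, hge, ?_⟩
    have hsimp : ((( ∅ : Finset (Fin m)).biUnion S ∩ Ul).card : ℝ) = 0 := by simp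
    rw [hsimp, Finset.sum_empty] at hwt
    have hKpos : 0 < K := hK
    have hlogeq : Real.log (K * (1 - τ)) = Real.log K + Real.log (1 - τ) :=
      Real.log_mul hKpos.ne' h1τ.ne'
    have hloge : -1 ≤ Real.log (1 - τ) := by
      have h1 : Real.exp (-1) ≤ 1 - τ := by
        rw [Real.exp_neg, ← one_div]
        linarith
      have h2 := Real.log_le_log (Real.exp_pos (-1)) h1
      rwa [Real.log_exp] at h2
    have hAτ : 0 ≤ A / τ := div_nonneg hA0 hτ0.le
    have hbound : (A / τ) * (Real.log (K - τ * 0) - Real.log (K * (1 - τ))) ≤ A / τ := by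
      have h1 : Real.log (K - τ * 0) - Real.log (K * (1 - τ)) ≤ 1 := by
        rw [mul_zero, sub_zero, hlogeq]; linarith
      have h2 := mul_le_mul_of_nonneg_left h1 hAτ
      rw [mul_one] at h2
      exact h2
    have hdiv : A / τ = (1 / τ) * A := by ring
    linarith
end

section
/- Let (U, S_1, ..., S_m) be a finite set system with set weights w_i ≥ 0, and let B > 0. Suppose x_i ≥ 0 and z_j satisfy z_j ≤ min{1, Σ_{i : e_j ∈ S_i} x_i} for all e_j ∈ U and Σ_i w_i x_i ≤ B, and let Z = Σ_{e_j ∈ U} z_j. Then there exists T ⊆ {1,...,m} with |∪_{i∈T} S_i| ≥ (1 - 1/e)·Z and Σ_{i∈T} w_i ≤ B + max_i w_i. -/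
open Finset


lemma mycov_key {α : Type*} [Fintype α] [DecidableEq α] {m : ℕ}
    (S : Fin m → Finset α) (x : Fin m → ℝ) (C : Finset α) :
    ∑ e ∈ Finset.univ \ C, ∑ i ∈ Finset.univ.filter (fun i => e ∈ S i), x i
      = ∑ i : Fin m, ((S i \ C).card : ℝ) * x i := by
  have h1 : ∀ e, ∑ i ∈ Finset.univ.filter (fun i => e ∈ S i), x i
      = ∑ i : Fin m, if e ∈ S i then x i else 0 := fun e => (Finset.sum_filter _ _)
  simp_rw [h1]
  rw [Finset.sum_comm]
  refine Finset.sum_congr rfl fun i _ => ?_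
  rw [← Finset.sum_filter]
  have : (Finset.univ \ C).filter (fun e => e ∈ S i) = S i \ C := by
    ext e; simp [Finset.mem_sdiff, and_comm]
  rw [this, Finset.sum_const, nsmul_eq_mul]

set_option maxHeartbeats 1600000 in
lemma mycov_aux {α : Type*} [Fintype α] [DecidableEq α] {m : ℕ}
    (S : Fin m → Finset α) (w : Fin m → ℝ) (hw : ∀ i, 0 ≤ w i)
    (B : ℝ) (hB : 0 < B)
    (x : Fin m → ℝ) (z : α → ℝ)
    (hx : ∀ i, 0 ≤ x i)
    (hz : ∀ e, z e ≤ min 1 (∑ i ∈ Finset.univ.filter (fun i => e ∈ S i), x i))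
    (hbudget : ∑ i, w i * x i ≤ B)
    (W : ℝ) (hWub : ∀ i, w i ≤ W) (hW0 : 0 ≤ W)
    (hZ : 0 ≤ ∑ e, z e) :
    ∀ n : ℕ, ∀ T₀ : Finset (Fin m),
      (Finset.univ \ T₀.biUnion S).card ≤ n →
      ∑ i ∈ T₀, w i ≤ B →
      (∑ e, z e) - ((T₀.biUnion S).card : ℝ)
        ≤ Real.exp (-(∑ i ∈ T₀, w i) / B) * (∑ e, z e) →
      ∃ T : Finset (Fin m),
        (1 - 1 / Real.exp 1) * (∑ e, z e) ≤ ((T.biUnion S).card : ℝ) ∧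
        ∑ i ∈ T, w i ≤ B + W := by
  set Z := ∑ e, z e with hZdef
  clear_value Z
  intro n
  induction n with
  | zero =>
      intro T₀ hcard hwt _
      refine ⟨T₀, ?_, by linarith⟩
      -- everything is covered
      have hC : T₀.biUnion S = Finset.univ := by
        have hempty : Finset.univ \ T₀.biUnion S = ∅ :=
          Finset.card_eq_zero.mp (Nat.le_zero.mp hcard)
        rw [Finset.sdiff_eq_empty_iff_subset] at hempty
        exact Finset.eq_univ_of_forall fun e => hempty (Finset.mem_univ e)
      have hZle : Z ≤ ((T₀.biUnion S).card : ℝ) := by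
        rw [hC]
        calc Z = ∑ e : α, z e := hZdef
        _ ≤ ∑ _e : α, (1:ℝ) := Finset.sum_le_sum fun e _ => (hz e).trans (min_le_left _ _)
        _ = (Fintype.card α : ℝ) := by simp
        _ = ((Finset.univ : Finset α).card : ℝ) := by rw [Finset.card_univ]
      have h1e : 0 < 1 / Real.exp 1 := by positivity
      nlinarith [hZ]
  | succ k ih =>
      intro T₀ hcard hwt hexp
      by_cases hD : Z - ((T₀.biUnion S).card : ℝ) ≤ (1 / Real.exp 1) * Z
      · exact ⟨T₀, by linarith, by linarith⟩
      push_neg at hD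
      set C := T₀.biUnion S with hCdef
      clear_value C
      set c : ℝ := (C.card : ℝ) with hcdef
      clear_value c
      have h1e : 0 < 1 / Real.exp 1 := by positivity
      have hDpos : 0 < Z - c := lt_of_le_of_lt (by nlinarith) hD
      -- key inequality
      have hkey : Z - c ≤ ∑ i : Fin m, ((S i \ C).card : ℝ) * x i := by
        have hsplit : ∑ e ∈ Finset.univ \ C, z e + ∑ e ∈ C, z e = Z := by
          rw [hZdef]; exact Finset.sum_sdiff (Finset.subset_univ C)
        have h1 : ∑ e ∈ C, z e ≤ c := by
          calc ∑ e ∈ C, z e ≤ ∑ _e ∈ C, (1:ℝ) :=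
                Finset.sum_le_sum fun e _ => (hz e).trans (min_le_left _ _)
          _ = c := by simp [hcdef]
        have h2 : ∑ e ∈ Finset.univ \ C, z e
            ≤ ∑ e ∈ Finset.univ \ C, ∑ i ∈ Finset.univ.filter (fun i => e ∈ S i), x i :=
          Finset.sum_le_sum fun e _ => (hz e).trans (min_le_right _ _)
        rw [mycov_key S x C] at h2
        linarith
      -- find a good set
      have hgood : ∃ i : Fin m, 0 < x i * ((S i \ C).card : ℝ) ∧
          w i * (Z - c) ≤ B * ((S i \ C).card : ℝ) := by
        by_contra h
        push_neg at h
        have hexist : ∃ i : Fin m, (0:ℝ) < x i * ((S i \ C).card : ℝ) := by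
          by_contra h'
          push_neg at h'
          have : ∑ i : Fin m, ((S i \ C).card : ℝ) * x i ≤ 0 := by
            apply Finset.sum_nonpos
            intro i _
            have := h' i
            nlinarith
          linarith
        obtain ⟨i₀, hi₀⟩ := hexist
        have hlt : ∑ i : Fin m, x i * (B * ((S i \ C).card : ℝ))
            < ∑ i : Fin m, x i * (w i * (Z - c)) := by
          apply Finset.sum_lt_sum
          · intro i _
            by_cases hp : 0 < x i * ((S i \ C).card : ℝ)
            · have := (h i hp)
              have hxi : 0 < x i := by
                rcases (hx i).lt_or_eq with h'|h'
                · exact h'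
                · rw [← h', zero_mul] at hp; exact absurd hp (lt_irrefl 0)
              nlinarith
            · push_neg at hp
              have hx0 : x i * ((S i \ C).card : ℝ) = 0 :=
                le_antisymm hp (mul_nonneg (hx i) (Nat.cast_nonneg _))
              have : x i * (B * ((S i \ C).card : ℝ)) = 0 := by
                nlinarith
              rw [this]
              exact mul_nonneg (hx i) (mul_nonneg (hw i) hDpos.le)
          · refine ⟨i₀, Finset.mem_univ _, ?_⟩
            have hxi : 0 < x i₀ := by
              rcases (hx i₀).lt_or_eq with h'|h'
              · exact h'
              · rw [← h', zero_mul] at hi₀; exact absurd hi₀ (lt_irrefl 0)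
            have := h i₀ hi₀
            nlinarith
        have e1 : ∑ i : Fin m, x i * (B * ((S i \ C).card : ℝ))
            = B * ∑ i : Fin m, ((S i \ C).card : ℝ) * x i := by
          rw [Finset.mul_sum]; refine Finset.sum_congr rfl fun i _ => by ring
        have e2 : ∑ i : Fin m, x i * (w i * (Z - c))
            = (Z - c) * ∑ i : Fin m, w i * x i := by
          rw [Finset.mul_sum]; refine Finset.sum_congr rfl fun i _ => by ring
        rw [e1, e2] at hlt
        nlinarith
      obtain ⟨i, hxm, hratio⟩ := hgood
      have hmpos : 0 < ((S i \ C).card : ℝ) := by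
        have h0 : ((S i \ C).card : ℝ) ≠ 0 := by
          intro h0; rw [h0, mul_zero] at hxm; exact absurd hxm (lt_irrefl 0)
        exact lt_of_le_of_ne (Nat.cast_nonneg _) (Ne.symm h0)
      have hiT : i ∉ T₀ := by
        intro hi
        have : S i ⊆ C := by rw [hCdef]; exact Finset.subset_biUnion_of_mem S hi
        have : (S i \ C) = ∅ := Finset.sdiff_eq_empty_iff_subset.mpr this
        rw [this] at hmpos; simp at hmpos
      set T₁ := insert i T₀ with hT₁
      clear_value T₁
      have hwt₁ : ∑ j ∈ T₁, w j = w i + ∑ j ∈ T₀, w j := by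
        rw [hT₁]; exact Finset.sum_insert hiT
      have hcov₁ : ((T₁.biUnion S).card : ℝ) = ((S i \ C).card : ℝ) + c := by
        rw [hT₁, Finset.biUnion_insert]
        rw [← hCdef]
        rw [← Finset.card_sdiff_add_card, hcdef]
        push_cast
        ring
      -- new exponential bound
      have hexp₁ : Z - ((T₁.biUnion S).card : ℝ)
          ≤ Real.exp (-(∑ j ∈ T₁, w j) / B) * Z := by
        have hm : w i / B * (Z - c) ≤ ((S i \ C).card : ℝ) := by
          rw [div_mul_eq_mul_div, div_le_iff₀ hB]
          nlinarith
        have step1 : Z - ((T₁.biUnion S).card : ℝ) ≤ (1 - w i / B) * (Z - c) := by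
          rw [hcov₁]; nlinarith
        have step2 : (1 - w i / B) * (Z - c) ≤ Real.exp (-(w i / B)) * (Z - c) := by
          have := Real.add_one_le_exp (-(w i / B))
          nlinarith
        have step3 : Real.exp (-(w i / B)) * (Z - c)
            ≤ Real.exp (-(w i / B)) * (Real.exp (-(∑ j ∈ T₀, w j) / B) * Z) := by
          have : (0:ℝ) ≤ Real.exp (-(w i / B)) := (Real.exp_pos _).le
          exact mul_le_mul_of_nonneg_left hexp this
        have e3 : Real.exp (-(w i / B)) * Real.exp (-(∑ j ∈ T₀, w j) / B)
            = Real.exp (-(∑ j ∈ T₁, w j) / B) := by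
          rw [← Real.exp_add, hwt₁]
          congr 1
          ring
        calc Z - ((T₁.biUnion S).card : ℝ) ≤ (1 - w i / B) * (Z - c) := step1
        _ ≤ Real.exp (-(w i / B)) * (Z - c) := step2
        _ ≤ Real.exp (-(w i / B)) * (Real.exp (-(∑ j ∈ T₀, w j) / B) * Z) := step3
        _ = Real.exp (-(∑ j ∈ T₁, w j) / B) * Z := by rw [← mul_assoc, e3]
      by_cases hb : ∑ j ∈ T₁, w j ≤ B
      · -- continue recursion
        apply ih T₁ _ hb hexp₁
        have hss : Finset.univ \ T₁.biUnion S ⊂ Finset.univ \ C := by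
          rw [hT₁, Finset.biUnion_insert, ← hCdef]
          constructor
          · intro e he
            simp only [Finset.mem_sdiff, Finset.mem_union] at he ⊢
            exact ⟨he.1, fun h => he.2 (Or.inr h)⟩
          · intro hsub
            obtain ⟨e, he⟩ := Finset.card_pos.mp (by exact_mod_cast hmpos)
            have he' : e ∈ Finset.univ \ C := by
              simp only [Finset.mem_sdiff] at he ⊢
              exact ⟨Finset.mem_univ _, he.2⟩
            have := hsub he'
            simp only [Finset.mem_sdiff, Finset.mem_union] at this he
            exact this.2 (Or.inl he.1)
        have := Finset.card_lt_card hss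
        omega
      · -- stop: budget exceeded
        push_neg at hb
        refine ⟨T₁, ?_, ?_⟩
        · have hlt : -(∑ j ∈ T₁, w j) / B ≤ -1 := by
            rw [div_le_iff₀ hB]; linarith
          have hmono := Real.exp_le_exp.mpr hlt
          rw [Real.exp_neg] at hmono
          have hfinal : Real.exp (-(∑ j ∈ T₁, w j) / B) * Z ≤ (Real.exp 1)⁻¹ * Z :=
            mul_le_mul_of_nonneg_right hmono hZ
          have h5 := hexp₁.trans hfinal
          rw [← one_div] at h5
          linarith
        · rw [hwt₁]
          have := hWub i
          linarith

/-- Greedy for budgeted max coverage versus the LP value: for any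
fractional solution of budget `B` and value `Z = Σ_j z_j`, there is a collection `T`
covering at least `(1 - 1/e)·Z` elements with weight at most `B + max_i w_i`. -/
theorem greedy_budgeted_max_coverage
    {α : Type*} [Fintype α] [DecidableEq α] {m : ℕ}
    (S : Fin m → Finset α) (w : Fin m → ℝ) (hw : ∀ i, 0 ≤ w i)
    (B : ℝ) (hB : 0 < B)
    (x : Fin m → ℝ) (z : α → ℝ)
    (hx : ∀ i, 0 ≤ x i)
    (hz : ∀ e, z e ≤ min 1 (∑ i ∈ Finset.univ.filter (fun i => e ∈ S i), x i))
    (hbudget : ∑ i, w i * x i ≤ B)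
    (W : ℝ) (hW : IsGreatest (Set.range w) W) :
    ∃ T : Finset (Fin m),
      (1 - 1 / Real.exp 1) * (∑ e, z e) ≤ ((T.biUnion S).card : ℝ) ∧
      ∑ i ∈ T, w i ≤ B + W := by
  obtain ⟨⟨i₀, hi₀⟩, hub⟩ := hW
  have hWub : ∀ i, w i ≤ W := fun i => hub ⟨i, rfl⟩
  have hW0 : 0 ≤ W := hi₀ ▸ hw i₀
  rcases le_or_gt (∑ e, z e) 0 with hZ | hZ
  · refine ⟨∅, ?_, ?_⟩
    · have h1 : (0:ℝ) < 1 - 1 / Real.exp 1 := by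
        have h2 : 1 < Real.exp 1 := by
          have := Real.add_one_le_exp (1:ℝ)
          linarith
        have : 1 / Real.exp 1 < 1 := by
          rw [div_lt_one (by positivity)]; exact h2
        linarith
      have : (1 - 1 / Real.exp 1) * (∑ e, z e) ≤ 0 := mul_nonpos_of_nonneg_of_nonpos h1.le hZ
      simpa using this
    · simp; linarith
  · have := mycov_aux S w hw B hB x z hx hz hbudget W hWub hW0 hZ.le
      (Finset.univ \ (∅ : Finset (Fin m)).biUnion S).card ∅ le_rfl
      (by simp; linarith) ?_
    · exact this
    · simp only [Finset.biUnion_empty, Finset.card_empty, Finset.sum_empty, Nat.cast_zero,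
        neg_zero, zero_div, Real.exp_zero, one_mul, sub_zero]
      exact le_refl _
end

section
/- Let (U, S_1, ..., S_m) be a finite set system with set weights w_i ≥ 0, and let B > 0. Suppose x_i ≥ 0 and z_j satisfy z_j ≤ min{1, Σ_{i : e_j ∈ S_i} x_i} for all e_j ∈ U and Σ_i w_i x_i ≤ B, and let Z = Σ_{e_j ∈ U} z_j. If there is a constant c > 0 such that |S_i| ≤ c·Z for every i, then there exists T ⊆ {1,...,m} with |∪_{i∈T} S_i| ≥ (1 - 1/e)·Z and Σ_{i∈T} w_i ≤ (1 + e·c)·B. -/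
open Finset

/-- Greedy for budgeted max coverage when no set is large: if every
set covers at most `c·Z` elements, there is a collection `T` covering at least
`(1 - 1/e)·Z` elements with weight at most `(1 + e·c)·B`. -/
theorem greedy_budgeted_max_coverage_small_sets
    {α : Type*} [Fintype α] [DecidableEq α] {m : ℕ}
    (S : Fin m → Finset α) (w : Fin m → ℝ) (hw : ∀ i, 0 ≤ w i)
    (B : ℝ) (hB : 0 < B)
    (x : Fin m → ℝ) (z : α → ℝ)
    (hx : ∀ i, 0 ≤ x i)
    (hz : ∀ e, z e ≤ min 1 (∑ i ∈ Finset.univ.filter (fun i => e ∈ S i), x i))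
    (hbudget : ∑ i, w i * x i ≤ B)
    (c : ℝ) (hc : 0 < c)
    (hsmall : ∀ i, ((S i).card : ℝ) ≤ c * ∑ e, z e) :
    ∃ T : Finset (Fin m),
      (1 - 1 / Real.exp 1) * (∑ e, z e) ≤ ((T.biUnion S).card : ℝ) ∧
      ∑ i ∈ T, w i ≤ (1 + Real.exp 1 * c) * B := by
  classical
  set Z := ∑ e, z e with hZdef
  have hz1 : ∀ e, z e ≤ 1 := fun e => (hz e).trans (min_le_left _ _)
  -- Key selection lemma
  have key : ∀ C : Finset α, 0 < Z - (C.card : ℝ) →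
      ∃ i, (S i \ C).Nonempty ∧ (Z - (C.card : ℝ)) / B * w i ≤ ((S i \ C).card : ℝ) := by
    intro C hg
    by_contra hcon
    push_neg at hcon
    -- split Z over C and its complement
    have hsplit : ∑ e ∈ univ \ C, z e + ∑ e ∈ C, z e = Z := by
      rw [hZdef]
      exact Finset.sum_sdiff (Finset.subset_univ C)
    have hCz : ∑ e ∈ C, z e ≤ (C.card : ℝ) := by
      calc ∑ e ∈ C, z e ≤ ∑ e ∈ C, (1 : ℝ) := Finset.sum_le_sum (fun e _ => hz1 e)
        _ = (C.card : ℝ) := by simp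
    have hA : Z - (C.card : ℝ) ≤ ∑ e ∈ univ \ C, z e := by linarith
    -- swap sums
    have hswap : ∑ e ∈ univ \ C, ∑ i ∈ univ.filter (fun i => e ∈ S i), x i
        = ∑ i, x i * ((S i \ C).card : ℝ) := by
      have h1 : ∀ e, ∑ i ∈ univ.filter (fun i => e ∈ S i), x i
          = ∑ i, if e ∈ S i then x i else 0 := by
        intro e; rw [Finset.sum_filter]
      simp_rw [h1]
      rw [Finset.sum_comm]
      refine Finset.sum_congr rfl (fun i _ => ?_)
      rw [← Finset.sum_filter]
      have : (univ \ C).filter (fun e => e ∈ S i) = S i \ C := by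
        ext e; simp [Finset.mem_filter, Finset.mem_sdiff, and_comm]
      rw [this, Finset.sum_const, nsmul_eq_mul, mul_comm]
    have hBle : ∑ e ∈ univ \ C, z e ≤ ∑ i, x i * ((S i \ C).card : ℝ) := by
      rw [← hswap]
      exact Finset.sum_le_sum (fun e _ => (hz e).trans (min_le_right _ _))
    -- find a witness with positive x and nonempty residual set
    obtain ⟨e, heA, hze⟩ : ∃ e ∈ univ \ C, 0 < z e := by
      by_contra hno
      push_neg at hno
      have : ∑ e ∈ univ \ C, z e ≤ 0 := Finset.sum_nonpos (fun e he => hno e he)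
      linarith
    have hxpos : 0 < ∑ i ∈ univ.filter (fun i => e ∈ S i), x i :=
      lt_of_lt_of_le hze ((hz e).trans (min_le_right _ _))
    obtain ⟨i₀, hi₀mem, hxi₀⟩ : ∃ i ∈ univ.filter (fun i => e ∈ S i), 0 < x i := by
      by_contra hno
      push_neg at hno
      have : ∑ i ∈ univ.filter (fun i => e ∈ S i), x i ≤ 0 :=
        Finset.sum_nonpos (fun i hi => hno i hi)
      linarith
    have heSi₀ : e ∈ S i₀ := (Finset.mem_filter.mp hi₀mem).2
    have hi₀ne : (S i₀ \ C).Nonempty :=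
      ⟨e, Finset.mem_sdiff.mpr ⟨heSi₀, (Finset.mem_sdiff.mp heA).2⟩⟩
    -- strict inequality
    have hstrict : ∑ i, x i * ((S i \ C).card : ℝ)
        < ∑ i, x i * ((Z - (C.card : ℝ)) / B * w i) := by
      refine Finset.sum_lt_sum (fun i _ => ?_) ⟨i₀, Finset.mem_univ i₀, ?_⟩
      · rcases (S i \ C).eq_empty_or_nonempty with hemp | hne
        · rw [hemp]
          simp only [Finset.card_empty, Nat.cast_zero, mul_zero]
          exact mul_nonneg (hx i) (mul_nonneg (div_nonneg hg.le hB.le) (hw i))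
        · exact mul_le_mul_of_nonneg_left (hcon i hne).le (hx i)
      · exact mul_lt_mul_of_pos_left (hcon i₀ hi₀ne) hxi₀
    have hRHS : ∑ i, x i * ((Z - (C.card : ℝ)) / B * w i) ≤ Z - (C.card : ℝ) := by
      have h1 : ∑ i, x i * ((Z - (C.card : ℝ)) / B * w i)
          = (Z - (C.card : ℝ)) / B * ∑ i, w i * x i := by
        rw [Finset.mul_sum]
        exact Finset.sum_congr rfl (fun i _ => by ring)
      rw [h1]
      have h2 : (Z - (C.card : ℝ)) / B * ∑ i, w i * x i ≤ (Z - (C.card : ℝ)) / B * B :=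
        mul_le_mul_of_nonneg_left hbudget (div_nonneg hg.le hB.le)
      rw [div_mul_cancel₀ _ (ne_of_gt hB)] at h2
      exact h2
    linarith
  -- Main induction
  have main : ∀ n : ℕ, ∀ C : Finset α, 0 < Z → (univ \ C).card ≤ n →
      Z / Real.exp 1 < Z - (C.card : ℝ) →
      ∃ T : Finset (Fin m),
        (1 - 1 / Real.exp 1) * Z ≤ (((C ∪ T.biUnion S)).card : ℝ) ∧
        ∑ i ∈ T, w i ≤ B * (1 + Real.log (Z - (C.card : ℝ)) - Real.log Z)
          + Real.exp 1 * c * B := by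
    intro n
    induction n with
    | zero =>
      intro C hZpos hcard hg
      exfalso
      have hgpos : 0 < Z - (C.card : ℝ) := by
        have := div_pos hZpos (Real.exp_pos 1); linarith
      obtain ⟨i, hDne, -⟩ := key C hgpos
      obtain ⟨e, he⟩ := hDne
      have : e ∈ univ \ C := by
        simp only [Finset.mem_sdiff, Finset.mem_univ, true_and]
        exact (Finset.mem_sdiff.mp he).2
      have : (univ \ C).Nonempty := ⟨e, this⟩
      have := Finset.card_pos.mpr this
      omega
    | succ n ih =>
      intro C hZpos hcard hg
      have hexp1 : (1 : ℝ) < Real.exp 1 := by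
        have := Real.add_one_le_exp 1; linarith
      have hZe : 0 < Z / Real.exp 1 := div_pos hZpos (Real.exp_pos 1)
      have hgpos : 0 < Z - (C.card : ℝ) := by linarith
      obtain ⟨i, hDne, hwi⟩ := key C hgpos
      have hDcard : 0 < ((S i \ C).card : ℝ) := by
        exact_mod_cast Finset.card_pos.mpr hDne
      have hunion : (((C ∪ S i).card : ℕ) : ℝ) = (C.card : ℝ) + ((S i \ C).card : ℝ) := by
        rw [Finset.union_comm, ← Finset.card_sdiff_add_card]
        push_cast; ring
      have hwiB : w i ≤ ((S i \ C).card : ℝ) * B / (Z - (C.card : ℝ)) := by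
        rw [le_div_iff₀ hgpos]
        have := mul_le_mul_of_nonneg_right hwi hB.le
        rw [div_mul_eq_mul_div, div_mul_cancel₀] at this
        · linarith
        · exact ne_of_gt hB
      have hlogZe : Real.log (Z / Real.exp 1) = Real.log Z - 1 := by
        rw [Real.log_div (ne_of_gt hZpos) (ne_of_gt (Real.exp_pos 1)), Real.log_exp]
      by_cases hcase : Z - (((C ∪ S i).card : ℕ) : ℝ) ≤ Z / Real.exp 1
      · -- one more set suffices
        refine ⟨{i}, ?_, ?_⟩
        · have h1 : ({i} : Finset (Fin m)).biUnion S = S i := by simp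
          rw [h1]
          have h2 : (1 - 1 / Real.exp 1) * Z = Z - Z / Real.exp 1 := by
            field_simp
          rw [h2]
          linarith
        · rw [Finset.sum_singleton]
          -- w i ≤ e c B
          have hSc : ((S i \ C).card : ℝ) ≤ c * Z := by
            have := Finset.card_le_card (Finset.sdiff_subset : S i \ C ⊆ S i)
            calc ((S i \ C).card : ℝ) ≤ ((S i).card : ℝ) := by exact_mod_cast this
              _ ≤ c * Z := hsmall i
          have hwecB : w i ≤ Real.exp 1 * c * B := by
            have h3 : ((S i \ C).card : ℝ) * B / (Z - (C.card : ℝ)) ≤ c * Z * B / (Z / Real.exp 1) := by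
              apply div_le_div₀ (by positivity) (by nlinarith) hZe (le_of_lt hg)
            have h4 : c * Z * B / (Z / Real.exp 1) = Real.exp 1 * c * B := by
              field_simp
            linarith [hwiB, h3.trans_eq h4]
          have hlogge : Real.log Z - 1 ≤ Real.log (Z - (C.card : ℝ)) := by
            rw [← hlogZe]
            exact Real.log_le_log hZe hg.le
          nlinarith [hB.le]
      · -- recurse
        push_neg at hcase
        have hg'pos : 0 < Z - (((C ∪ S i).card : ℕ) : ℝ) := by linarith
        have hsub : univ \ (C ∪ S i) ⊂ univ \ C := by
          obtain ⟨e, he⟩ := hDne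
          have heS : e ∈ S i := (Finset.mem_sdiff.mp he).1
          have heC : e ∉ C := (Finset.mem_sdiff.mp he).2
          refine (Finset.ssubset_iff_of_subset
            (Finset.sdiff_subset_sdiff (Finset.Subset.refl _) Finset.subset_union_left)).mpr
            ⟨e, ?_, ?_⟩
          · simp [heC]
          · simp [heS]
        have hcard' : (univ \ (C ∪ S i)).card ≤ n := by
          have := Finset.card_lt_card hsub
          omega
        obtain ⟨T', hcov', hw'⟩ := ih (C ∪ S i) hZpos hcard' hcase
        refine ⟨insert i T', ?_, ?_⟩
        · rw [Finset.biUnion_insert, ← Finset.union_assoc]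
          exact hcov'
        · have hsumins : ∑ j ∈ insert i T', w j ≤ w i + ∑ j ∈ T', w j := by
            by_cases hiT : i ∈ T'
            · rw [Finset.insert_eq_self.mpr hiT]
              linarith [hw i]
            · rw [Finset.sum_insert hiT]
          -- log inequality
          set g := Z - (C.card : ℝ) with hgdef
          set g' := Z - (((C ∪ S i).card : ℕ) : ℝ) with hg'def
          have hgg' : g' = g - ((S i \ C).card : ℝ) := by
            rw [hg'def, hgdef, hunion]; ring
          have hlog1 : Real.log g' - Real.log g ≤ g' / g - 1 := by
            rw [← Real.log_div (ne_of_gt hg'pos) (ne_of_gt hgpos)]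
            exact Real.log_le_sub_one_of_pos (div_pos hg'pos hgpos)
          have hlog2 : g' / g - 1 = -(((S i \ C).card : ℝ) / g) := by
            rw [hgg']
            field_simp
            ring
          have hlog3 : ((S i \ C).card : ℝ) / g ≤ Real.log g - Real.log g' := by
            rw [hlog2] at hlog1; linarith
          have hwB : w i ≤ B * (Real.log g - Real.log g') := by
            have h5 : ((S i \ C).card : ℝ) * B / g = B * (((S i \ C).card : ℝ) / g) := by
              ring
            have h6 : B * (((S i \ C).card : ℝ) / g) ≤ B * (Real.log g - Real.log g') :=
              mul_le_mul_of_nonneg_left hlog3 hB.le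
            calc w i ≤ ((S i \ C).card : ℝ) * B / g := hwiB
              _ = B * (((S i \ C).card : ℝ) / g) := h5
              _ ≤ B * (Real.log g - Real.log g') := h6
          have expand : B * (Real.log g - Real.log g')
              + (B * (1 + Real.log g' - Real.log Z) + Real.exp 1 * c * B)
              = B * (1 + Real.log g - Real.log Z) + Real.exp 1 * c * B := by ring
          linarith [hw', hwB, hsumins]
  -- Conclusion
  by_cases hZ0 : Z ≤ 0
  · refine ⟨∅, ?_, ?_⟩
    · simp only [Finset.biUnion_empty, Finset.card_empty, Nat.cast_zero]
      have h1 : 0 ≤ 1 - 1 / Real.exp 1 := by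
        have := Real.add_one_le_exp 1
        have h2 : (0:ℝ) < Real.exp 1 := Real.exp_pos 1
        rw [sub_nonneg, div_le_one h2]; linarith
      exact mul_nonpos_of_nonneg_of_nonpos h1 hZ0
    · simp only [Finset.sum_empty]
      have : 0 < 1 + Real.exp 1 * c := by positivity
      positivity
  · push_neg at hZ0
    have hexp1 : (1 : ℝ) < Real.exp 1 := by
      have := Real.add_one_le_exp 1; linarith
    have hcond : Z / Real.exp 1 < Z - (((∅ : Finset α).card : ℕ) : ℝ) := by
      simp only [Finset.card_empty, Nat.cast_zero, sub_zero]
      exact div_lt_self hZ0 hexp1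
    obtain ⟨T, hcov, hwt⟩ := main (univ \ (∅ : Finset α)).card ∅ hZ0 le_rfl hcond
    refine ⟨T, ?_, ?_⟩
    · rwa [Finset.empty_union] at hcov
    · simp only [Finset.card_empty, Nat.cast_zero, sub_zero] at hwt
      have hlog : B * (1 + Real.log Z - Real.log Z) + Real.exp 1 * c * B
          = (1 + Real.exp 1 * c) * B := by ring
      linarith [hwt, hlog.le, hlog.ge]
end

section
/- Let T be a finite index set and let x_i ∈ [0,1] for each i ∈ T. Then 1 - ∏_{i∈T} (1 - x_i) ≥ (1 - 1/e) · min{1, Σ_{i∈T} x_i}. -/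
open Finset

/-- Pointwise comparison of the multilinear and concave-closure
extensions of a rank-one coverage function:
`1 - ∏_{i∈T} (1 - x_i) ≥ (1 - 1/e) · min{1, Σ_{i∈T} x_i}` for `x_i ∈ [0,1]`. -/
theorem one_sub_prod_ge_min
    {ι : Type*} (T : Finset ι) (x : ι → ℝ)
    (hx : ∀ i ∈ T, x i ∈ Set.Icc (0:ℝ) 1) :
    (1 - 1 / Real.exp 1) * min 1 (∑ i ∈ T, x i) ≤ 1 - ∏ i ∈ T, (1 - x i) := by
  set s := ∑ i ∈ T, x i with hs
  have hs0 : 0 ≤ s := Finset.sum_nonneg fun i hi => (hx i hi).1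
  -- product bound: ∏ (1 - x i) ≤ exp (-s)
  have hprod : ∏ i ∈ T, (1 - x i) ≤ Real.exp (-s) := by
    have : ∏ i ∈ T, (1 - x i) ≤ ∏ i ∈ T, Real.exp (-(x i)) := by
      apply Finset.prod_le_prod
      · intro i hi; linarith [(hx i hi).2]
      · intro i hi
        have := Real.add_one_le_exp (-(x i))
        linarith
    calc ∏ i ∈ T, (1 - x i) ≤ ∏ i ∈ T, Real.exp (-(x i)) := this
      _ = Real.exp (∑ i ∈ T, -(x i)) := (Real.exp_sum _ _).symm
      _ = Real.exp (-s) := by rw [← Finset.sum_neg_distrib]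
  have einv : (1 : ℝ) / Real.exp 1 = Real.exp (-1) := by
    rw [Real.exp_neg]; ring
  rcases le_total s 1 with h1 | h1
  · -- s ≤ 1 : min = s, use convexity of exp
    rw [min_eq_right h1]
    have hconv := convexOn_exp.2 (Set.mem_univ (-1 : ℝ)) (Set.mem_univ (0 : ℝ))
      hs0 (by linarith : (0:ℝ) ≤ 1 - s) (by ring)
    simp only [smul_eq_mul, mul_zero, add_zero, Real.exp_zero, mul_one] at hconv
    have : Real.exp (-s) ≤ s * Real.exp (-1) + (1 - s) := by
      have : s * -1 = -s := by ring
      rw [this] at hconv; linarith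
    rw [einv]
    nlinarith [this, hprod]
  · rw [min_eq_left h1]
    have : Real.exp (-s) ≤ Real.exp (-1) := Real.exp_le_exp.2 (by linarith)
    rw [einv]
    nlinarith [this, hprod]
end

section
/- Let (U, S_1, ..., S_m) be a finite set system, let A_e ≥ 0 be a weight for each element e ∈ U, and let x ∈ [0,1]^m. Define the multilinear extension G(x) = Σ_{e∈U} A_e · (1 - ∏_{i : e ∈ S_i} (1 - x_i)) and the extension g̃(x) = Σ_{e∈U} A_e · min{1, Σ_{i : e ∈ S_i} x_i}. Then G(x) ≥ (1 - 1/e) · g̃(x). -/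
open Finset

lemma key_ineq (s : ℝ) (hs : 0 ≤ s) :
    (1 - 1 / Real.exp 1) * min 1 s ≤ 1 - Real.exp (-s) := by
  rcases le_or_gt s 1 with h | h
  · rw [min_eq_right h]
    have hconv := convexOn_exp.2 (Set.mem_univ (0:ℝ)) (Set.mem_univ (-1:ℝ))
      (by linarith : (0:ℝ) ≤ 1 - s) hs (by ring)
    simp only [smul_eq_mul, mul_zero, mul_neg_one, zero_add, Real.exp_zero] at hconv
    have h1 : Real.exp (-1) = 1 / Real.exp 1 := by
      rw [Real.exp_neg]; ring
    rw [h1] at hconv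
    have hx : (0:ℝ) < Real.exp 1 := Real.exp_pos 1
    calc (1 - 1 / Real.exp 1) * s = 1 - ((1 - s) * 1 + s * (1 / Real.exp 1)) + (1 - s) * (1 / Real.exp 1) - (1 - s) * (1 / Real.exp 1) := by ring
    _ ≤ 1 - Real.exp (-s) := by nlinarith [div_nonneg (zero_le_one) hx.le]
  · rw [min_eq_left h.le]
    have h2 : Real.exp (-s) ≤ Real.exp (-1) := Real.exp_le_exp.2 (by linarith)
    have h3 : Real.exp (-1) = 1 / Real.exp 1 := by rw [Real.exp_neg]; ring
    linarith

/-- For a weighted coverage function, the multilinear extension `G`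
dominates `(1 - 1/e)` times the concave-closure extension `g̃`. -/
theorem multilinear_ge_concave_closure_coverage
    {α : Type*} [Fintype α] [DecidableEq α] {m : ℕ}
    (S : Fin m → Finset α) (A : α → ℝ) (hA : ∀ e, 0 ≤ A e)
    (x : Fin m → ℝ) (hx : ∀ i, x i ∈ Set.Icc (0:ℝ) 1) :
    (1 - 1 / Real.exp 1) *
        (∑ e, A e * min 1 (∑ i ∈ Finset.univ.filter (fun i => e ∈ S i), x i)) ≤
      ∑ e, A e * (1 - ∏ i ∈ Finset.univ.filter (fun i => e ∈ S i), (1 - x i)) := by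
  rw [Finset.mul_sum]
  apply Finset.sum_le_sum
  intro e _
  set t := Finset.univ.filter (fun i => e ∈ S i)
  set s := ∑ i ∈ t, x i with hsdef
  have hs0 : 0 ≤ s := Finset.sum_nonneg fun i _ => (hx i).1
  have hprod : ∏ i ∈ t, (1 - x i) ≤ Real.exp (-s) := by
    rw [hsdef, ← Finset.sum_neg_distrib, Real.exp_sum]
    apply Finset.prod_le_prod
    · intro i _; linarith [(hx i).2]
    · intro i _; exact Real.add_one_le_exp (-x i) |>.trans_eq' (by ring)
  have := key_ineq s hs0
  calc (1 - 1 / Real.exp 1) * (A e * min 1 s) = A e * ((1 - 1 / Real.exp 1) * min 1 s) := by ring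
  _ ≤ A e * (1 - ∏ i ∈ t, (1 - x i)) := by
      apply mul_le_mul_of_nonneg_left _ (hA e)
      linarith
end

section
/- Let N be a finite ground set with weights w: N → ℝ≥0, and for j = 1,...,h let f_j : 2^N → ℝ≥0 be normalized monotone submodular functions (f_j(∅) = 0). For each j let N_j = { i ∈ N : f_j({i}) > 0 } be the active elements of constraint j, and suppose each i ∈ N lies in at most r of the sets N_j (r-sparsity). Let S* ⊆ N satisfy f_j(S*) ≥ 1 for all j. Then there exist sets T_1, ..., T_h ⊆ N with f_j(T_j) ≥ 1 for every j and Σ_{j=1}^h w(T_j) ≤ r · w(S*). Consequently, writing opt_j for the minimum of w(T) over T with f_j(T) ≥ 1, we have Σ_{j=1}^h opt_j ≤ r · w(S*). -/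
open Finset

lemma sparse_aux {α : Type*} [DecidableEq α]
    (g : Finset α → ℝ) (hnormal : g ∅ = 0)
    (hsubmod : ∀ (A B : Finset α), g (A ∪ B) + g (A ∩ B) ≤ g A + g B)
    (B : Finset α) :
    ∀ D : Finset α, (∀ i ∈ D, g {i} ≤ 0) → g (B ∪ D) ≤ g B := by
  intro D
  induction D using Finset.induction_on with
  | empty => simp
  | @insert a D hnm ih =>
    intro hD
    have h1 : g (B ∪ insert a D) = g (insert a (B ∪ D)) := by
      rw [Finset.union_insert]
    rw [h1]
    by_cases ha : a ∈ B ∪ D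
    · rw [Finset.insert_eq_self.2 ha]
      exact ih fun i hi => hD i (Finset.mem_insert_of_mem hi)
    · have := hsubmod {a} (B ∪ D)
      have hint : ({a} : Finset α) ∩ (B ∪ D) = ∅ := by
        simp [Finset.singleton_inter_of_notMem ha]
      rw [hint, hnormal] at this
      have h2 : ({a} : Finset α) ∪ (B ∪ D) = insert a (B ∪ D) := by
        rw [Finset.insert_eq]
      rw [h2] at this
      have h3 := hD a (Finset.mem_insert_self a D)
      have h4 := ih (fun i hi => hD i (Finset.mem_insert_of_mem hi))
      linarith

/-- Sparsity bound for multiple submodular covering constraints: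
if every ground element is active in at most `r` of the `h` normalized monotone
submodular covering constraints, and `S*` satisfies all of them, then one can satisfy
each constraint `j` separately by a set `T_j` with total weight at most `r·w(S*)`;
consequently `Σ_j opt_j ≤ r·w(S*)`. -/
theorem sparse_sum_of_opts
    {α : Type*} [DecidableEq α] [Fintype α] {h : ℕ}
    (w : α → ℝ) (hw : ∀ i, 0 ≤ w i)
    (f : Fin h → Finset α → ℝ)
    (hnormal : ∀ j, f j ∅ = 0)
    (hnonneg : ∀ j A, 0 ≤ f j A)
    (hmono : ∀ j (A B : Finset α), A ⊆ B → f j A ≤ f j B)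
    (hsubmod : ∀ j (A B : Finset α), f j (A ∪ B) + f j (A ∩ B) ≤ f j A + f j B)
    (r : ℕ)
    (hsparse : ∀ i : α,
      (Finset.univ.filter (fun j : Fin h => 0 < f j {i})).card ≤ r)
    (Sstar : Finset α) (hSstar : ∀ j, 1 ≤ f j Sstar) :
    (∃ T : Fin h → Finset α, (∀ j, 1 ≤ f j (T j)) ∧
        ∑ j, ∑ i ∈ T j, w i ≤ (r : ℝ) * ∑ i ∈ Sstar, w i) ∧
      ∀ opt : Fin h → ℝ,
        (∀ j, IsLeast {c : ℝ | ∃ T : Finset α, 1 ≤ f j T ∧ c = ∑ i ∈ T, w i} (opt j)) →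
        ∑ j, opt j ≤ (r : ℝ) * ∑ i ∈ Sstar, w i := by
  set T : Fin h → Finset α := fun j => Sstar.filter (fun i => 0 < f j {i}) with hT
  have hcov : ∀ j, 1 ≤ f j (T j) := by
    intro j
    have hsplit : T j ∪ Sstar.filter (fun i => ¬ 0 < f j {i}) = Sstar := by
      simpa [hT] using Finset.filter_union_filter_not_eq (fun i => 0 < f j {i}) Sstar
    have := sparse_aux (f j) (hnormal j) (hsubmod j) (T j)
      (Sstar.filter (fun i => ¬ 0 < f j {i}))
      (by intro i hi; have := (Finset.mem_filter.1 hi).2; linarith [not_lt.1 this])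
    rw [hsplit] at this
    linarith [hSstar j]
  have hwt : ∑ j, ∑ i ∈ T j, w i ≤ (r : ℝ) * ∑ i ∈ Sstar, w i := by
    have key : ∑ j, ∑ i ∈ T j, w i
        = ∑ i ∈ Sstar, ((Finset.univ.filter (fun j : Fin h => 0 < f j {i})).card : ℝ) * w i := by
      calc ∑ j, ∑ i ∈ T j, w i
          = ∑ j : Fin h, ∑ i ∈ Sstar, if 0 < f j {i} then w i else 0 := by
            refine Finset.sum_congr rfl fun j _ => ?_
            rw [hT, Finset.sum_filter]
        _ = ∑ i ∈ Sstar, ∑ j : Fin h, if 0 < f j {i} then w i else 0 :=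
            Finset.sum_comm
        _ = _ := by
            refine Finset.sum_congr rfl fun i _ => ?_
            rw [← Finset.sum_filter]
            simp [Finset.sum_const, mul_comm]
    rw [key, Finset.mul_sum]
    refine Finset.sum_le_sum fun i _ => ?_
    exact mul_le_mul_of_nonneg_right (by exact_mod_cast hsparse i) (hw i)
  refine ⟨⟨T, hcov, hwt⟩, fun opt hopt => ?_⟩
  have : ∑ j, opt j ≤ ∑ j, ∑ i ∈ T j, w i :=
    Finset.sum_le_sum fun j _ => (hopt j).2 ⟨T j, hcov j, rfl⟩
  linarith
end

section
/- Let (U, S_1, ..., S_m) be a finite set system with element weights A_e ∈ [0,1], and let f(X) = Σ_{e ∈ ∪_{i∈X} S_i} A_e be the associated weighted coverage function on {1,...,m}. Let D ⊆ {1,...,m}, let b' > 0, let 0 < τ < 1, and for i ∉ D write m_i = f(D ∪ {i}) - f(D). Let H = { i ∉ D : m_i ≥ b' } and L = { i ∉ D : 0 < m_i < b' }. Suppose x_i ≥ 0 satisfies the knapsack-cover inequality Σ_{i ∉ D} min{m_i, b'}·x_i ≥ b', and suppose Σ_{i∈H} x_i/τ < 1/2. Let U' = U \ ∪_{i∈D}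 S_i and for e ∈ U' let z''_e = Σ_{i ∈ L : e ∈ S_i} x_i/τ. Then Σ_{e ∈ U'} A_e · z''_e ≥ b'/(2τ). -/
open Finset

/-- Weighted coverage function of a set system: `cover S A X = Σ_{e ∈ ∪_{i∈X} S_i} A_e`. -/
noncomputable def cover {α : Type*} [DecidableEq α] {m : ℕ}
    (S : Fin m → Finset α) (A : α → ℝ) (X : Finset (Fin m)) : ℝ :=
  ∑ e ∈ X.biUnion S, A e

lemma cover_insert_sub {α : Type*} [DecidableEq α] {m : ℕ}
    (S : Fin m → Finset α) (A : α → ℝ) (D : Finset (Fin m)) (i : Fin m) :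
    cover S A (insert i D) - cover S A D = ∑ e ∈ S i \ D.biUnion S, A e := by
  unfold cover
  rw [Finset.biUnion_insert, ← Finset.sdiff_union_self_eq_union,
    Finset.sum_union (Finset.sdiff_disjoint)]
  ring

/-- Key claim for fixing an unsatisfied constraint: if the KC
inequality holds with respect to `D` and the scaled fractional mass on the heavy sets
`H` is less than `1/2`, then the light sets `L` fractionally cover the residual
requirement to extent `b'/(2τ)` on the residual universe. -/
theorem light_sets_cover_residual
    {α : Type*} [Fintype α] [DecidableEq α] {m : ℕ}
    (S : Fin m → Finset α) (A : α → ℝ) (hA : ∀ e, A e ∈ Set.Icc (0:ℝ) 1)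
    (D : Finset (Fin m)) (b' τ : ℝ) (hb' : 0 < b') (hτ0 : 0 < τ) (hτ1 : τ < 1)
    (x : Fin m → ℝ) (hx : ∀ i, 0 ≤ x i)
    (hKC : b' ≤ ∑ i ∈ Finset.univ \ D,
      min (cover S A (insert i D) - cover S A D) b' * x i)
    (hH : ∑ i ∈ (Finset.univ \ D).filter
        (fun i => b' ≤ cover S A (insert i D) - cover S A D), x i / τ < 1 / 2) :
    b' / (2 * τ) ≤
      ∑ e ∈ Finset.univ \ D.biUnion S,
        A e * ∑ i ∈ ((Finset.univ \ D).filter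
          (fun i => 0 < cover S A (insert i D) - cover S A D ∧
            cover S A (insert i D) - cover S A D < b')).filter (fun i => e ∈ S i),
          x i / τ := by
  set g : Fin m → ℝ := fun i => cover S A (insert i D) - cover S A D with hg
  set L : Finset (Fin m) :=
    (Finset.univ \ D).filter (fun i => 0 < g i ∧ g i < b') with hL
  set H : Finset (Fin m) :=
    (Finset.univ \ D).filter (fun i => b' ≤ g i) with hHdef
  -- rewrite the RHS by swapping sums
  have hswap :
      ∑ e ∈ Finset.univ \ D.biUnion S,
        A e * ∑ i ∈ L.filter (fun i => e ∈ S i), x i / τ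
      = ∑ i ∈ L, g i * (x i / τ) := by
    have h1 : ∀ e, A e * ∑ i ∈ L.filter (fun i => e ∈ S i), x i / τ
        = ∑ i ∈ L, if e ∈ S i then A e * (x i / τ) else 0 := by
      intro e
      rw [Finset.mul_sum, Finset.sum_filter]
    simp_rw [h1]
    rw [Finset.sum_comm]
    apply Finset.sum_congr rfl
    intro i hi
    rw [← Finset.sum_filter]
    have hfe : (Finset.univ \ D.biUnion S).filter (fun e => e ∈ S i)
        = S i \ D.biUnion S := by
      ext e
      simp [Finset.mem_filter, Finset.mem_sdiff, and_comm]
    rw [hfe]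
    show ∑ a ∈ S i \ D.biUnion S, A a * (x i / τ)
        = (cover S A (insert i D) - cover S A D) * (x i / τ)
    rw [cover_insert_sub, Finset.sum_mul]
  rw [hswap]
  -- each g i is a sum of nonneg weights over S i \ D.biUnion S
  have hgnn : ∀ i, (¬ 0 < g i) → g i ≤ 0 := fun i h => le_of_not_gt h
  -- key: b'/2 ≤ ∑ i ∈ L, g i * x i
  have hHsum : ∑ i ∈ H, x i < τ / 2 := by
    have : ∑ i ∈ H, x i / τ = (∑ i ∈ H, x i) / τ := by rw [Finset.sum_div]
    rw [hHdef] at *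
    rw [this] at hH
    have := (div_lt_iff₀ hτ0).mp hH
    linarith
  have hbound : ∑ i ∈ Finset.univ \ D, min (g i) b' * x i
      ≤ ∑ i ∈ H, b' * x i + ∑ i ∈ L, g i * x i := by
    rw [hHdef, hL, Finset.sum_filter, Finset.sum_filter, ← Finset.sum_add_distrib]
    apply Finset.sum_le_sum
    intro i _
    by_cases hHi : b' ≤ g i
    · have h2 : ¬ (0 < g i ∧ g i < b') := by
        rintro ⟨_, h3⟩; linarith
      rw [if_pos hHi, if_neg h2, min_eq_right hHi]
      linarith
    · by_cases hLi : 0 < g i ∧ g i < b'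
      · rw [if_neg hHi, if_pos hLi, min_eq_left (le_of_lt hLi.2)]
        linarith
      · rw [if_neg hHi, if_neg hLi]
        have hgle : g i ≤ 0 := by
          by_contra h
          exact hLi ⟨lt_of_not_ge h, lt_of_not_ge hHi⟩
        have : min (g i) b' = g i := min_eq_left (by linarith)
        rw [this, zero_add]
        exact mul_nonpos_of_nonpos_of_nonneg hgle (hx i)
  have hHb : ∑ i ∈ H, b' * x i = b' * ∑ i ∈ H, x i := by
    rw [Finset.mul_sum]
  have hkey : b' / 2 ≤ ∑ i ∈ L, g i * x i := by
    have h1 : b' * ∑ i ∈ H, x i ≤ b' * (τ / 2) :=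
      mul_le_mul_of_nonneg_left (le_of_lt hHsum) (le_of_lt hb')
    have h2 : b' * (τ / 2) ≤ b' / 2 := by nlinarith
    have := hKC.trans hbound
    rw [hHb] at this
    linarith
  have heq : ∑ i ∈ L, g i * (x i / τ) = (∑ i ∈ L, g i * x i) / τ := by
    rw [Finset.sum_div]
    apply Finset.sum_congr rfl
    intro i _
    ring
  rw [heq]
  rw [div_le_div_iff₀ (by linarith) hτ0] at *
  nlinarith [hkey]
end

section
/- Let (U, S_1, ..., S_m) be a finite set system with element weights A_e ≥ 0, and let g(T) = Σ_{e ∈ ∪_{i∈T} S_i} A_e be the associated weighted coverage function. Let b > 0, suppose g({i}) ≤ b for every i ∈ {1,...,m}, and let x ∈ [0,1]^m satisfy G(x) ≥ 2b, where G(x) = Σ_{e∈U} A_e · (1 - ∏_{i : e ∈ S_i} (1 - x_i)) is the multilinear extension of g. Let R ⊆ {1,...,m} be a random set obtained by including each index i independently with probability x_i. Then Pr[g(R) < b] ≤ e^{-1/4}. -/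
open Finset

lemma exp_neg_le_quad (t : ℝ) (ht : 0 ≤ t) : Real.exp (-t) ≤ 1 - t + t^2/2 := by
  have h := Real.quadratic_le_exp_of_nonneg ht
  have hinv : Real.exp (-t) * Real.exp t = 1 := by rw [← Real.exp_add]; simp
  nlinarith [Real.exp_pos (-t), Real.exp_pos t, sq_nonneg (t-1), sq_nonneg t]

lemma mgf_bound (p c b lam : ℝ) (hp0 : 0 ≤ p) (hp1 : p ≤ 1) (hc0 : 0 ≤ c) (hcb : c ≤ b)
    (hl : 0 ≤ lam) :
    (1-p) * Real.exp (lam*p*c) + p * Real.exp (lam*p*c - lam*c)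
      ≤ Real.exp (lam^2*b*p*c/2) := by
  have e1 : Real.exp (lam*p*c - lam*c) = Real.exp (lam*p*c) * Real.exp (-(lam*c)) := by
    rw [← Real.exp_add]; ring_nf
  have h2 : (1-p) * Real.exp (lam*p*c) + p * Real.exp (lam*p*c - lam*c)
      = Real.exp (lam*p*c) * (1 - p*(1 - Real.exp (-(lam*c)))) := by rw [e1]; ring
  have h3 : 1 - p*(1 - Real.exp (-(lam*c))) ≤ Real.exp (-(p*(1 - Real.exp (-(lam*c))))) := by
    have := Real.add_one_le_exp (-(p*(1 - Real.exp (-(lam*c))))); linarith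
  have h4 : Real.exp (lam*p*c) * (1 - p*(1 - Real.exp (-(lam*c))))
      ≤ Real.exp (lam*p*c) * Real.exp (-(p*(1 - Real.exp (-(lam*c))))) :=
    mul_le_mul_of_nonneg_left h3 (Real.exp_pos _).le
  rw [h2]
  refine h4.trans ?_
  rw [← Real.exp_add]
  apply Real.exp_le_exp.mpr
  have hq : Real.exp (-(lam*c)) ≤ 1 - lam*c + (lam*c)^2/2 :=
    exp_neg_le_quad _ (mul_nonneg hl hc0)
  nlinarith [mul_nonneg hp0 (mul_nonneg (mul_nonneg (mul_nonneg hl hl) hc0) (sub_nonneg.mpr hcb)),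
    mul_nonneg hp0 hc0, mul_nonneg (mul_nonneg hl hl) (mul_nonneg hc0 hc0),
    mul_le_mul_of_nonneg_left hq hp0]
lemma group_sum {m : ℕ} (K : Fin m) (f : (Fin m → Bool) → ℝ) :
    ∑ ω : Fin m → Bool, f ω
      = ∑ ω ∈ univ.filter (fun ω => ω K = false), (f ω + f (Function.update ω K true)) := by
  rw [Finset.sum_add_distrib]
  rw [← Finset.sum_filter_add_sum_filter_not univ (fun ω => ω K = false) f]
  congr 1
  apply Finset.sum_nbij' (i := fun ω => Function.update ω K false)
    (j := fun ω => Function.update ω K true)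
  · intro a ha; simp
  · intro a ha; simp
  · intro a ha
    simp only [mem_filter, mem_univ, true_and] at ha
    simp only [Bool.not_eq_false] at ha
    funext j
    rcases eq_or_ne j K with rfl | hj
    · simp [ha]
    · simp [Function.update_of_ne hj]
  · intro a ha
    simp only [mem_filter, mem_univ, true_and] at ha
    funext j
    rcases eq_or_ne j K with rfl | hj
    · simp [ha]
    · simp [Function.update_of_ne hj]
  · intro a ha
    simp only [mem_filter, mem_univ, true_and] at ha
    simp only [Bool.not_eq_false] at ha
    congr 1
    funext j
    rcases eq_or_ne j K with rfl | hj
    · simp [ha]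
    · simp [Function.update_of_ne hj]
lemma key_ind {m : ℕ} (r : Fin m → Bool → ℝ) (hr : ∀ i v, 0 ≤ r i v)
    (hr1 : ∀ i, r i false + r i true = 1)
    (χ : Fin m → (Fin m → Bool) → ℝ) (hχ0 : ∀ i ω, 0 ≤ χ i ω)
    (hdep : ∀ (i K : Fin m), ∀ ω v, i < K → χ i (Function.update ω K v) = χ i ω)
    (havg : ∀ (i : Fin m) (ω : Fin m → Bool), r i false * χ i (Function.update ω i false)
        + r i true * χ i (Function.update ω i true) ≤ 1) :
    ∀ k, k ≤ m →
      ∑ ω : Fin m → Bool, (∏ i, r i (ω i)) * ∏ i ∈ univ.filter (fun i : Fin m => (i:ℕ) < k), χ i ω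
        ≤ 1 := by
  intro k
  induction k with
  | zero =>
    intro _
    have : ∀ ω : Fin m → Bool,
        (∏ i, r i (ω i)) * ∏ i ∈ univ.filter (fun i : Fin m => (i:ℕ) < 0), χ i ω
        = ∏ i, r i (ω i) := by
      intro ω
      have : univ.filter (fun i : Fin m => (i:ℕ) < 0) = ∅ := by
        apply Finset.filter_false_of_mem; intro i _; omega
      rw [this, Finset.prod_empty, mul_one]
    rw [Finset.sum_congr rfl (fun ω _ => this ω)]
    have hps := Finset.prod_univ_sum (fun _ : Fin m => (univ : Finset Bool)) (fun i v => r i v)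
    rw [Fintype.piFinset_univ] at hps
    rw [← hps]
    apply le_of_eq
    apply Finset.prod_eq_one
    intro i _
    rw [Fintype.sum_bool]
    rw [← hr1 i]; ring
  | succ k ih =>
    intro hk1
    have hkm : k < m := by omega
    have ihk := ih (by omega)
    set K : Fin m := ⟨k, hkm⟩ with hK
    have hKval : (K:ℕ) = k := by rw [hK]
    have hfilt : univ.filter (fun i : Fin m => (i:ℕ) < k + 1)
        = insert K (univ.filter (fun i : Fin m => (i:ℕ) < k)) := by
      ext i
      simp only [mem_filter, mem_univ, true_and, mem_insert]
      constructor
      · intro h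
        rcases Nat.lt_succ_iff_lt_or_eq.mp h with h | h
        · exact Or.inr h
        · exact Or.inl (Fin.ext (by omega))
      · rintro (rfl | h)
        · omega
        · omega
    have hKnot : K ∉ univ.filter (fun i : Fin m => (i:ℕ) < k) := by
      simp [hK]
    -- abbreviations
    set Φ : (Fin m → Bool) → ℝ := fun ω => ∏ i ∈ univ.filter (fun i : Fin m => (i:ℕ) < k), χ i ω
      with hΦ
    have hΦ0 : ∀ ω, 0 ≤ Φ ω := fun ω => Finset.prod_nonneg (fun i _ => hχ0 i ω)
    have hΦupd : ∀ ω v, Φ (Function.update ω K v) = Φ ω := by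
      intro ω v
      apply Finset.prod_congr rfl
      intro i hi
      simp only [mem_filter, mem_univ, true_and] at hi
      exact hdep i K ω v (Fin.lt_def.mpr (by omega))
    calc ∑ ω : Fin m → Bool, (∏ i, r i (ω i)) * ∏ i ∈ univ.filter (fun i : Fin m => (i:ℕ) < k+1), χ i ω
        = ∑ ω : Fin m → Bool, (∏ i, r i (ω i)) * (χ K ω * Φ ω) := by
          apply Finset.sum_congr rfl; intro ω _
          rw [hfilt, Finset.prod_insert hKnot]
      _ = ∑ ω ∈ univ.filter (fun ω => ω K = false),
            ((∏ i, r i (ω i)) * (χ K ω * Φ ω)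
              + (∏ i, r i (Function.update ω K true i))
                * (χ K (Function.update ω K true) * Φ (Function.update ω K true))) :=
          group_sum K _
      _ ≤ ∑ ω ∈ univ.filter (fun ω => ω K = false),
            ((∏ i, r i (ω i)) * Φ ω
              + (∏ i, r i (Function.update ω K true i)) * Φ (Function.update ω K true)) := by
          apply Finset.sum_le_sum
          intro ω hω
          simp only [mem_filter, mem_univ, true_and] at hω
          -- rewrite products via erase
          have hPe : ∀ v : Bool, (∏ i, r i (Function.update ω K v i))
              = r K v * ∏ i ∈ univ.erase K, r i (ω i) := by
            intro v
            rw [← Finset.mul_prod_erase univ (fun i => r i (Function.update ω K v i)) (mem_univ K)]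
            congr 1
            · simp
            · apply Finset.prod_congr rfl
              intro i hi
              rw [Function.update_of_ne (Finset.ne_of_mem_erase hi)]
          have hωeq : ω = Function.update ω K false := by
            rw [← hω]; rw [Function.update_eq_self]
          have hχωeq : χ K ω = χ K (Function.update ω K false) := congrArg (χ K) hωeq
          have hC0 : 0 ≤ ∏ i ∈ univ.erase K, r i (ω i) :=
            Finset.prod_nonneg (fun i _ => hr i _)
          have key : (∏ i, r i (ω i)) * (χ K ω * Φ ω)
              + (∏ i, r i (Function.update ω K true i))
                * (χ K (Function.update ω K true) * Φ (Function.update ω K true))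
              = ((∏ i ∈ univ.erase K, r i (ω i)) * Φ ω)
                * (r K false * χ K (Function.update ω K false)
                    + r K true * χ K (Function.update ω K true)) := by
            rw [hPe true, hΦupd, ← Finset.mul_prod_erase univ (fun i => r i (ω i)) (mem_univ K),
              hω, hχωeq]
            ring
          have key2 : (∏ i, r i (ω i)) * Φ ω
              + (∏ i, r i (Function.update ω K true i)) * Φ (Function.update ω K true)
              = ((∏ i ∈ univ.erase K, r i (ω i)) * Φ ω) * 1 := by
            rw [hPe true, hΦupd, ← Finset.mul_prod_erase univ (fun i => r i (ω i)) (mem_univ K),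
              hω, ← hr1 K]
            ring
          rw [key, key2]
          apply mul_le_mul_of_nonneg_left (havg K ω) (mul_nonneg hC0 (hΦ0 ω))
      _ = ∑ ω : Fin m → Bool, (∏ i, r i (ω i)) * Φ ω := (group_sum K _).symm
      _ ≤ 1 := ihk
section Cov
variable {α : Type*} [Fintype α] [DecidableEq α] {m : ℕ}

/-- interpolation point: coordinates below `k` are rounded, the rest stay at `x`. -/
def yMix (x : Fin m → ℝ) (ω : Fin m → Bool) (k : ℕ) (j : Fin m) : ℝ :=
  if (j:ℕ) < k then (if ω j then 1 else 0) else x j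

def ccov (S : Fin m → Finset α) (A : α → ℝ) (x : Fin m → ℝ) (ω : Fin m → Bool)
    (k : Fin m) : ℝ :=
  ∑ e ∈ S k, A e * ∏ j ∈ (univ.filter (fun i => e ∈ S i)).erase k, (1 - yMix x ω (k:ℕ) j)

def HHc (S : Fin m → Finset α) (A : α → ℝ) (x : Fin m → ℝ) (ω : Fin m → Bool) (k : ℕ) : ℝ :=
  ∑ e, A e * (1 - ∏ j ∈ univ.filter (fun i => e ∈ S i), (1 - yMix x ω k j))

lemma yMix_zero (x : Fin m → ℝ) (ω : Fin m → Bool) (j : Fin m) :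
    yMix x ω 0 j = x j := by simp [yMix]

lemma yMix_mem (x : Fin m → ℝ) (hx : ∀ i, x i ∈ Set.Icc (0:ℝ) 1) (ω : Fin m → Bool)
    (k : ℕ) (j : Fin m) : 0 ≤ yMix x ω k j ∧ yMix x ω k j ≤ 1 := by
  unfold yMix
  split
  · split <;> norm_num
  · exact ⟨(hx j).1, (hx j).2⟩

lemma HHc_zero (S : Fin m → Finset α) (A : α → ℝ) (x : Fin m → ℝ) (ω : Fin m → Bool) :
    HHc S A x ω 0
      = ∑ e, A e * (1 - ∏ i ∈ univ.filter (fun i => e ∈ S i), (1 - x i)) := by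
  unfold HHc
  simp [yMix_zero]

lemma HHc_top (S : Fin m → Finset α) (A : α → ℝ) (x : Fin m → ℝ) (ω : Fin m → Bool) :
    HHc S A x ω m = ∑ e ∈ (univ.filter (fun i => ω i = true)).biUnion S, A e := by
  unfold HHc
  have h1 : ∀ e : α, (1 - ∏ j ∈ univ.filter (fun i => e ∈ S i), (1 - yMix x ω m j))
      = if e ∈ (univ.filter (fun i => ω i = true)).biUnion S then (1:ℝ) else 0 := by
    intro e
    by_cases he : e ∈ (univ.filter (fun i => ω i = true)).biUnion S
    · rw [if_pos he]
      rw [Finset.mem_biUnion] at he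
      obtain ⟨i, hi, hei⟩ := he
      rw [Finset.mem_filter] at hi
      have hz : ∏ j ∈ univ.filter (fun i => e ∈ S i), (1 - yMix x ω m j) = 0 := by
        apply Finset.prod_eq_zero (Finset.mem_filter.mpr ⟨mem_univ i, hei⟩)
        unfold yMix
        rw [if_pos i.isLt, if_pos hi.2]
        ring
      rw [hz]; ring
    · rw [if_neg he]
      have hone : ∏ j ∈ univ.filter (fun i => e ∈ S i), (1 - yMix x ω m j) = 1 := by
        apply Finset.prod_eq_one
        intro j hj
        rw [Finset.mem_filter] at hj
        have hωj : ω j = false := by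
          by_contra hc
          exact he (Finset.mem_biUnion.mpr ⟨j, Finset.mem_filter.mpr
            ⟨mem_univ j, by simpa using hc⟩, hj.2⟩)
        unfold yMix
        rw [if_pos j.isLt, hωj]
        norm_num
      rw [hone]; ring
  calc ∑ e, A e * (1 - ∏ j ∈ univ.filter (fun i => e ∈ S i), (1 - yMix x ω m j))
      = ∑ e, (if e ∈ (univ.filter (fun i => ω i = true)).biUnion S then A e else 0) := by
        apply Finset.sum_congr rfl
        intro e _
        rw [h1 e]
        split <;> ring
    _ = ∑ e ∈ (univ.filter (fun i => ω i = true)).biUnion S, A e := by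
        rw [Finset.sum_ite_mem, Finset.univ_inter]

lemma yMix_succ_ne (x : Fin m → ℝ) (ω : Fin m → Bool) (k : Fin m) (j : Fin m) (hj : j ≠ k) :
    yMix x ω ((k:ℕ)+1) j = yMix x ω (k:ℕ) j := by
  unfold yMix
  have : ((j:ℕ) < (k:ℕ)+1) ↔ ((j:ℕ) < (k:ℕ)) := by
    constructor
    · intro h
      rcases Nat.lt_succ_iff_lt_or_eq.mp h with h | h
      · exact h
      · exact absurd (Fin.ext h) hj
    · omega
  rcases (iff_iff_and_or_not_and_not.mp this) with ⟨h1, h2⟩ | ⟨h1, h2⟩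
  · rw [if_pos h1, if_pos h2]
  · rw [if_neg h1, if_neg h2]

lemma HHc_diff (S : Fin m → Finset α) (A : α → ℝ) (x : Fin m → ℝ) (ω : Fin m → Bool)
    (k : Fin m) :
    HHc S A x ω ((k:ℕ)+1) - HHc S A x ω (k:ℕ)
      = ((if ω k then (1:ℝ) else 0) - x k) * ccov S A x ω k := by
  unfold HHc
  rw [← Finset.sum_sub_distrib]
  have h1 : ∀ e : α,
      A e * (1 - ∏ j ∈ univ.filter (fun i => e ∈ S i), (1 - yMix x ω ((k:ℕ)+1) j))
        - A e * (1 - ∏ j ∈ univ.filter (fun i => e ∈ S i), (1 - yMix x ω (k:ℕ) j))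
      = (if e ∈ S k then
          ((if ω k then (1:ℝ) else 0) - x k) *
            (A e * ∏ j ∈ (univ.filter (fun i => e ∈ S i)).erase k, (1 - yMix x ω (k:ℕ) j))
         else 0) := by
    intro e
    by_cases he : e ∈ S k
    · rw [if_pos he]
      have hk : k ∈ univ.filter (fun i => e ∈ S i) := Finset.mem_filter.mpr ⟨mem_univ k, he⟩
      rw [← Finset.mul_prod_erase _ _ hk, ← Finset.mul_prod_erase _ (fun j => (1 - yMix x ω (k:ℕ) j)) hk]
      have hrest : ∏ j ∈ (univ.filter (fun i => e ∈ S i)).erase k, (1 - yMix x ω ((k:ℕ)+1) j)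
          = ∏ j ∈ (univ.filter (fun i => e ∈ S i)).erase k, (1 - yMix x ω (k:ℕ) j) := by
        apply Finset.prod_congr rfl
        intro j hj
        rw [yMix_succ_ne x ω k j (Finset.ne_of_mem_erase hj)]
      rw [hrest]
      have hy1 : yMix x ω ((k:ℕ)+1) k = (if ω k then (1:ℝ) else 0) := by
        unfold yMix; rw [if_pos (Nat.lt_succ_self _)]
      have hy2 : yMix x ω (k:ℕ) k = x k := by
        unfold yMix; rw [if_neg (lt_irrefl _)]
      rw [hy1, hy2]
      ring
    · rw [if_neg he]
      have : ∏ j ∈ univ.filter (fun i => e ∈ S i), (1 - yMix x ω ((k:ℕ)+1) j)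
          = ∏ j ∈ univ.filter (fun i => e ∈ S i), (1 - yMix x ω (k:ℕ) j) := by
        apply Finset.prod_congr rfl
        intro j hj
        rw [yMix_succ_ne x ω k j]
        intro hjk
        rw [Finset.mem_filter] at hj
        exact he (hjk ▸ hj.2)
      rw [this]
      ring
  rw [Finset.sum_congr rfl (fun e _ => h1 e)]
  rw [Finset.sum_ite_mem, Finset.univ_inter, ← Finset.mul_sum]
  rfl


lemma ccov_nonneg (S : Fin m → Finset α) (A : α → ℝ) (hA : ∀ e, 0 ≤ A e)
    (x : Fin m → ℝ) (hx : ∀ i, x i ∈ Set.Icc (0:ℝ) 1) (ω : Fin m → Bool) (k : Fin m) :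
    0 ≤ ccov S A x ω k := by
  apply Finset.sum_nonneg
  intro e _
  apply mul_nonneg (hA e)
  apply Finset.prod_nonneg
  intro j _
  have := yMix_mem x hx ω (k:ℕ) j
  linarith [this.2]

lemma ccov_le (S : Fin m → Finset α) (A : α → ℝ) (hA : ∀ e, 0 ≤ A e)
    (b : ℝ) (hLip : ∀ i : Fin m, ∑ e ∈ S i, A e ≤ b)
    (x : Fin m → ℝ) (hx : ∀ i, x i ∈ Set.Icc (0:ℝ) 1) (ω : Fin m → Bool) (k : Fin m) :
    ccov S A x ω k ≤ b := by
  refine le_trans ?_ (hLip k)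
  apply Finset.sum_le_sum
  intro e _
  have hp1 : ∏ j ∈ (univ.filter (fun i => e ∈ S i)).erase k, (1 - yMix x ω (k:ℕ) j) ≤ 1 := by
    apply Finset.prod_le_one
    · intro j _
      have := yMix_mem x hx ω (k:ℕ) j
      linarith [this.2]
    · intro j _
      have := yMix_mem x hx ω (k:ℕ) j
      linarith [this.1]
  nlinarith [hA e, Finset.prod_nonneg (fun j (_ : j ∈ (univ.filter (fun i => e ∈ S i)).erase k) =>
    (by have := yMix_mem x hx ω (k:ℕ) j; linarith [this.2] : (0:ℝ) ≤ 1 - yMix x ω (k:ℕ) j))]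

lemma ccov_update (S : Fin m → Finset α) (A : α → ℝ) (x : Fin m → ℝ) (ω : Fin m → Bool)
    (k K : Fin m) (v : Bool) (h : (k:ℕ) ≤ (K:ℕ)) :
    ccov S A x (Function.update ω K v) k = ccov S A x ω k := by
  unfold ccov
  apply Finset.sum_congr rfl
  intro e _
  congr 1
  apply Finset.prod_congr rfl
  intro j _
  unfold yMix
  split
  · rename_i hjk
    have : j ≠ K := by
      intro hj
      subst hj
      omega
    rw [Function.update_of_ne this]
  · rfl

lemma tprodX {m' : ℕ} (x : Fin m' → ℝ) (F : Finset (Fin m')) :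
    ∑ k ∈ F, x k * ∏ j ∈ F.filter (fun j => k < j), (1 - x j)
      = 1 - ∏ j ∈ F, (1 - x j) := by
  induction F using Finset.induction_on_max with
  | empty => simp
  | insert a s ha ih =>
    have has : a ∉ s := fun h => lt_irrefl a (ha a h)
    rw [Finset.sum_insert has, Finset.prod_insert has]
    have h1 : (insert a s).filter (fun j => a < j) = ∅ := by
      apply Finset.filter_false_of_mem
      intro j hj
      rcases Finset.mem_insert.mp hj with rfl | hj
      · exact lt_irrefl _
      · intro hc; exact absurd (ha j hj) (asymm hc)
    have h2 : ∀ k ∈ s, (insert a s).filter (fun j => k < j)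
        = insert a (s.filter (fun j => k < j)) := by
      intro k hk
      ext j
      simp only [Finset.mem_filter, Finset.mem_insert]
      constructor
      · rintro ⟨rfl | hj, hlt⟩
        · exact Or.inl rfl
        · exact Or.inr ⟨hj, hlt⟩
      · rintro (rfl | ⟨hj, hlt⟩)
        · exact ⟨Or.inl rfl, ha k hk⟩
        · exact ⟨Or.inr hj, hlt⟩
    have h3 : ∑ k ∈ s, x k * ∏ j ∈ (insert a s).filter (fun j => k < j), (1 - x j)
        = (1 - x a) * ∑ k ∈ s, x k * ∏ j ∈ s.filter (fun j => k < j), (1 - x j) := by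
      rw [Finset.mul_sum]
      apply Finset.sum_congr rfl
      intro k hk
      rw [h2 k hk, Finset.prod_insert (fun h => has (Finset.filter_subset _ _ h))]
      ring
    rw [h1, h3, ih]
    simp
    ring

lemma sum_xc_le (S : Fin m → Finset α) (A : α → ℝ) (hA : ∀ e, 0 ≤ A e)
    (x : Fin m → ℝ) (hx : ∀ i, x i ∈ Set.Icc (0:ℝ) 1) (ω : Fin m → Bool) :
    ∑ k, x k * ccov S A x ω k ≤ HHc S A x ω 0 := by
  have step1 : ∀ k : Fin m, x k * ccov S A x ω k
      ≤ ∑ e ∈ S k, A e * (x k * ∏ j ∈ (univ.filter (fun i => e ∈ S i)).filter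
          (fun j => k < j), (1 - x j)) := by
    intro k
    unfold ccov
    rw [Finset.mul_sum]
    apply Finset.sum_le_sum
    intro e _
    have hsub : (univ.filter (fun i => e ∈ S i)).filter (fun j => k < j)
        ⊆ (univ.filter (fun i => e ∈ S i)).erase k := by
      intro j hj
      rw [Finset.mem_filter] at hj
      exact Finset.mem_erase.mpr ⟨ne_of_gt hj.2, hj.1⟩
    have hprodle : ∏ j ∈ (univ.filter (fun i => e ∈ S i)).erase k, (1 - yMix x ω (k:ℕ) j)
        ≤ ∏ j ∈ (univ.filter (fun i => e ∈ S i)).filter (fun j => k < j), (1 - x j) := by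
      rw [← Finset.prod_sdiff hsub]
      have hsmall : ∏ j ∈ (univ.filter (fun i => e ∈ S i)).filter (fun j => k < j),
          (1 - yMix x ω (k:ℕ) j)
          = ∏ j ∈ (univ.filter (fun i => e ∈ S i)).filter (fun j => k < j), (1 - x j) := by
        apply Finset.prod_congr rfl
        intro j hj
        rw [Finset.mem_filter] at hj
        unfold yMix
        rw [if_neg (by have := hj.2; omega)]
      rw [hsmall]
      have hA1 : ∏ j ∈ ((univ.filter (fun i => e ∈ S i)).erase k) \ ((univ.filter (fun i => e ∈ S i)).filter (fun j => k < j)), (1 - yMix x ω (k:ℕ) j) ≤ 1 := by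
        apply Finset.prod_le_one
        · intro j _; have := yMix_mem x hx ω (k:ℕ) j; linarith [this.2]
        · intro j _; have := yMix_mem x hx ω (k:ℕ) j; linarith [this.1]
      have hB0 : 0 ≤ ∏ j ∈ (univ.filter (fun i => e ∈ S i)).filter (fun j => k < j), (1 - x j) := by
        apply Finset.prod_nonneg
        intro j _
        have := hx j
        simp only [Set.mem_Icc] at this
        linarith [this.2]
      nlinarith
    have h0 : 0 ≤ A e * x k := mul_nonneg (hA e) (hx k).1
    calc x k * (A e * ∏ j ∈ (univ.filter (fun i => e ∈ S i)).erase k, (1 - yMix x ω (k:ℕ) j))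
        = (A e * x k) * ∏ j ∈ (univ.filter (fun i => e ∈ S i)).erase k, (1 - yMix x ω (k:ℕ) j) := by ring
      _ ≤ (A e * x k) * ∏ j ∈ (univ.filter (fun i => e ∈ S i)).filter (fun j => k < j), (1 - x j) :=
          mul_le_mul_of_nonneg_left hprodle h0
      _ = A e * (x k * ∏ j ∈ (univ.filter (fun i => e ∈ S i)).filter (fun j => k < j), (1 - x j)) := by ring
  calc ∑ k, x k * ccov S A x ω k
      ≤ ∑ k, ∑ e ∈ S k, A e * (x k * ∏ j ∈ (univ.filter (fun i => e ∈ S i)).filter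
          (fun j => k < j), (1 - x j)) := Finset.sum_le_sum (fun k _ => step1 k)
    _ = ∑ k : Fin m, ∑ e, (if e ∈ S k then A e * (x k * ∏ j ∈ (univ.filter (fun i => e ∈ S i)).filter
          (fun j => k < j), (1 - x j)) else 0) := by
        apply Finset.sum_congr rfl
        intro k _
        rw [Finset.sum_ite_mem, Finset.univ_inter]
    _ = ∑ e, ∑ k : Fin m, (if e ∈ S k then A e * (x k * ∏ j ∈ (univ.filter (fun i => e ∈ S i)).filter
          (fun j => k < j), (1 - x j)) else 0) := Finset.sum_comm
    _ = ∑ e, A e * ∑ k ∈ univ.filter (fun i => e ∈ S i),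
          x k * ∏ j ∈ (univ.filter (fun i => e ∈ S i)).filter (fun j => k < j), (1 - x j) := by
        apply Finset.sum_congr rfl
        intro e _
        rw [Finset.mul_sum]
        rw [← Finset.sum_filter]
    _ = ∑ e, A e * (1 - ∏ j ∈ univ.filter (fun i => e ∈ S i), (1 - x j)) := by
        apply Finset.sum_congr rfl
        intro e _
        rw [tprodX]
    _ = HHc S A x ω 0 := by
        rw [HHc_zero]

lemma telescope_g (S : Fin m → Finset α) (A : α → ℝ) (x : Fin m → ℝ) (ω : Fin m → Bool) :
    (∑ e ∈ (univ.filter (fun i => ω i = true)).biUnion S, A e) - HHc S A x ω 0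
      = ∑ k : Fin m, ((if ω k then (1:ℝ) else 0) - x k) * ccov S A x ω k := by
  rw [← HHc_top S A x ω]
  rw [← Finset.sum_range_sub (fun k => HHc S A x ω k) m]
  rw [← Fin.sum_univ_eq_sum_range (fun k => HHc S A x ω (k+1) - HHc S A x ω k) m]
  apply Finset.sum_congr rfl
  intro k _
  exact HHc_diff S A x ω k

end Cov

lemma core_real {α : Type*} [Fintype α] [DecidableEq α] {m : ℕ}
    (S : Fin m → Finset α) (A : α → ℝ) (hA : ∀ e, 0 ≤ A e)
    (b : ℝ) (hb : 0 < b)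
    (hLip : ∀ i : Fin m, ∑ e ∈ S i, A e ≤ b)
    (x : Fin m → ℝ) (hx : ∀ i, x i ∈ Set.Icc (0:ℝ) 1)
    (hG : 2 * b ≤
      ∑ e, A e * (1 - ∏ i ∈ Finset.univ.filter (fun i => e ∈ S i), (1 - x i))) :
    ∀ (P : (Fin m → Bool) → Prop) (_ : DecidablePred P)
      (_ : ∀ ω, P ω → (∑ e ∈ (Finset.univ.filter (fun i => ω i = true)).biUnion S, A e) < b),
    ∑ ω ∈ univ.filter P, ∏ i, (if ω i then x i else 1 - x i) ≤ Real.exp (-(1/4)) := by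
  intro P instP hP
  classical
  set G := ∑ e, A e * (1 - ∏ i ∈ Finset.univ.filter (fun i => e ∈ S i), (1 - x i)) with hGdef
  have hGpos : 0 < G := lt_of_lt_of_le (by linarith) hG
  set lam := (G - b)/(b*G) with hlamdef
  have hlam0 : 0 ≤ lam := div_nonneg (by linarith) (by positivity)
  set r : Fin m → Bool → ℝ := fun i v => if v then x i else 1 - x i with hrdef
  set χ : Fin m → (Fin m → Bool) → ℝ := fun k ω =>
    Real.exp (-(lam*((if ω k then (1:ℝ) else 0) - x k)*ccov S A x ω k)
      - (lam^2*b/2)*(x k * ccov S A x ω k)) with hχdef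
  have hr : ∀ i v, 0 ≤ r i v := by
    intro i v
    cases v <;> simp [hrdef] <;> [linarith [(hx i).2]; exact (hx i).1]
  have hr1 : ∀ i, r i false + r i true = 1 := by
    intro i; simp [hrdef]
  have hχ0 : ∀ k ω, 0 ≤ χ k ω := fun k ω => (Real.exp_pos _).le
  have hdep : ∀ (i K : Fin m), ∀ (ω : Fin m → Bool) (v : Bool), i < K →
      χ i (Function.update ω K v) = χ i ω := by
    intro i K ω v h
    simp only [hχdef]
    rw [Function.update_of_ne (ne_of_lt h), ccov_update S A x ω i K v (le_of_lt h)]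
  have havg : ∀ (i : Fin m) (ω : Fin m → Bool),
      r i false * χ i (Function.update ω i false)
        + r i true * χ i (Function.update ω i true) ≤ 1 := by
    intro i ω
    have hc0 : 0 ≤ ccov S A x ω i := ccov_nonneg S A hA x hx ω i
    have hcb : ccov S A x ω i ≤ b := ccov_le S A hA b hLip x hx ω i
    have hupdF : ccov S A x (Function.update ω i false) i = ccov S A x ω i :=
      ccov_update S A x ω i i false le_rfl
    have hupdT : ccov S A x (Function.update ω i true) i = ccov S A x ω i :=
      ccov_update S A x ω i i true le_rfl
    set c := ccov S A x ω i with hcdef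
    set p := x i with hpdef
    have e1 : χ i (Function.update ω i false) = Real.exp (lam*p*c - lam^2*b*p*c/2) := by
      simp only [hχdef, hupdF, Function.update_self]
      congr 1
      rw [if_neg (by simp)]
      ring
    have e2 : χ i (Function.update ω i true)
        = Real.exp ((lam*p*c - lam*c) - lam^2*b*p*c/2) := by
      simp only [hχdef, hupdT, Function.update_self]
      congr 1
      rw [if_pos trivial]
      ring
    have hm := mgf_bound p c b lam (hx i).1 (hx i).2 hc0 hcb hlam0
    have h2 := mul_le_mul_of_nonneg_right hm (Real.exp_pos (-(lam^2*b*p*c/2))).le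
    rw [← Real.exp_add] at h2
    simp only [add_neg_cancel, Real.exp_zero] at h2
    calc r i false * χ i (Function.update ω i false)
          + r i true * χ i (Function.update ω i true)
        = (1-p) * Real.exp (lam*p*c - lam^2*b*p*c/2)
            + p * Real.exp ((lam*p*c - lam*c) - lam^2*b*p*c/2) := by
          rw [e1, e2]; simp [hrdef, hpdef]
      _ = ((1-p) * Real.exp (lam*p*c) + p * Real.exp (lam*p*c - lam*c))
            * Real.exp (-(lam^2*b*p*c/2)) := by
          have hme : ∀ a c' : ℝ, Real.exp (a - c') = Real.exp a * Real.exp (-c') := by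
            intro a c'
            rw [sub_eq_add_neg, Real.exp_add]
          rw [hme (lam*p*c), hme (lam*p*c - lam*c)]
          ring
      _ ≤ 1 := h2
  have hkey := key_ind r hr hr1 χ hχ0 hdep havg m le_rfl
  have hfiltm : univ.filter (fun i : Fin m => (i:ℕ) < m) = univ := by
    apply Finset.filter_true_of_mem
    intro i _
    exact i.isLt
  rw [hfiltm] at hkey
  set g : (Fin m → Bool) → ℝ :=
    fun ω => ∑ e ∈ (univ.filter (fun i => ω i = true)).biUnion S, A e with hgdef
  have hW0 : ∀ ω : Fin m → Bool, 0 ≤ ∏ i, r i (ω i) :=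
    fun ω => Finset.prod_nonneg (fun i _ => hr i (ω i))
  have hprodχ0 : ∀ ω, 0 ≤ ∏ i, χ i ω := fun ω => Finset.prod_nonneg fun i _ => hχ0 i ω
  have hprodχ : ∀ ω : Fin m → Bool,
      ∏ i, χ i ω = Real.exp (-(lam * (g ω - G))
        - (lam^2*b/2) * ∑ k, x k * ccov S A x ω k) := by
    intro ω
    rw [← Real.exp_sum]
    congr 1
    have htel := telescope_g S A x ω
    rw [HHc_zero, ← hGdef] at htel
    have hgω : g ω - G = ∑ k : Fin m, ((if ω k then (1:ℝ) else 0) - x k) * ccov S A x ω k := htel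
    rw [hgω, Finset.mul_sum, Finset.mul_sum, ← Finset.sum_neg_distrib, ← Finset.sum_sub_distrib]
    apply Finset.sum_congr rfl
    intro k _
    ring
  have hSxc : ∀ ω : Fin m → Bool, ∑ k, x k * ccov S A x ω k ≤ G := by
    intro ω
    have := sum_xc_le S A hA x hx ω
    rwa [HHc_zero, ← hGdef] at this
  set D : ℝ := Real.exp (lam*(b-G) + (lam^2*b/2)*G) with hDdef
  have hDχ : ∀ ω : Fin m → Bool, P ω → (1:ℝ) ≤ D * ∏ i, χ i ω := by
    intro ω hPω
    rw [hprodχ ω, hDdef, ← Real.exp_add]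
    apply Real.one_le_exp
    have h4 := hSxc ω
    have h5 : 0 ≤ lam^2*b/2 := by positivity
    have h6 : 0 ≤ lam * (b - g ω) := mul_nonneg hlam0 (by linarith [hP ω hPω])
    nlinarith [mul_le_mul_of_nonneg_left h4 h5]
  calc ∑ ω ∈ univ.filter P, ∏ i, (if ω i then x i else 1 - x i)
      = ∑ ω ∈ univ.filter P, ∏ i, r i (ω i) := rfl
    _ ≤ ∑ ω ∈ univ.filter P, D * ((∏ i, r i (ω i)) * ∏ i, χ i ω) := by
        apply Finset.sum_le_sum
        intro ω hω
        have hPω : P ω := (Finset.mem_filter.mp hω).2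
        calc ∏ i, r i (ω i) = (∏ i, r i (ω i)) * 1 := by ring
          _ ≤ (∏ i, r i (ω i)) * (D * ∏ i, χ i ω) :=
              mul_le_mul_of_nonneg_left (hDχ ω hPω) (hW0 ω)
          _ = D * ((∏ i, r i (ω i)) * ∏ i, χ i ω) := by ring
    _ = D * ∑ ω ∈ univ.filter P, ((∏ i, r i (ω i)) * ∏ i, χ i ω) := by
        rw [Finset.mul_sum]
    _ ≤ D * ∑ ω : Fin m → Bool, ((∏ i, r i (ω i)) * ∏ i, χ i ω) := by
        apply mul_le_mul_of_nonneg_left _ (Real.exp_pos _).le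
        apply Finset.sum_le_sum_of_subset_of_nonneg (Finset.filter_subset _ _)
        intro ω _ _
        exact mul_nonneg (hW0 ω) (hprodχ0 ω)
    _ ≤ D * 1 := mul_le_mul_of_nonneg_left hkey (Real.exp_pos _).le
    _ ≤ Real.exp (-(1/4)) := by
        rw [mul_one, hDdef]
        apply Real.exp_le_exp.mpr
        have hlameq : lam*(b-G) + (lam^2*b/2)*G = -((G-b)^2/(2*(b*G))) := by
          rw [hlamdef]
          field_simp
          ring
        rw [hlameq]
        apply neg_le_neg
        rw [le_div_iff₀ (by positivity)]
        nlinarith [hb, hG]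

open Finset MeasureTheory Classical in
lemma measure_pi_bernoulli_eq {m : ℕ} (x : Fin m → ℝ) (hx : ∀ i, x i ∈ Set.Icc (0:ℝ) 1)
    (E : Set (Fin m → Bool)) :
    (Measure.pi (fun i : Fin m =>
        (PMF.bernoulli (Real.toNNReal (x i))
          (by simpa using Real.toNNReal_le_one.mpr (hx i).2)).toMeasure)) E
    = ENNReal.ofReal (∑ ω ∈ univ.filter (· ∈ E), ∏ i, (if ω i then x i else 1 - x i)) := by
  classical
  set μ := (Measure.pi (fun i : Fin m =>
        (PMF.bernoulli (Real.toNNReal (x i))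
          (by simpa using Real.toNNReal_le_one.mpr (hx i).2)).toMeasure)) with hμ
  have hE : E = ⋃ ω ∈ univ.filter (· ∈ E), ({ω} : Set (Fin m → Bool)) := by
    ext ω; simp
  conv_lhs => rw [hE]
  rw [measure_biUnion_finset]
  · rw [ENNReal.ofReal_sum_of_nonneg]
    · apply Finset.sum_congr rfl
      intro ω _
      have h1 : ({ω} : Set (Fin m → Bool)) = Set.univ.pi (fun i => {ω i}) := by
        rw [Set.univ_pi_singleton]
      rw [h1, Measure.pi_pi]
      rw [ENNReal.ofReal_prod_of_nonneg]
      · apply Finset.prod_congr rfl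
        intro i _
        rw [PMF.toMeasure_apply_singleton _ _ (measurableSet_singleton _)]
        show (cond (ω i) (ENNReal.ofReal (x i)) (1 - ENNReal.ofReal (x i))) = _
        cases hwi : ω i with
        | true => simp
        | false =>
          simp only [cond]
          rw [if_neg (by simp), ← ENNReal.ofReal_one, ← ENNReal.ofReal_sub _ (hx i).1]
      · intro i _
        cases hwi : ω i with
        | true => simpa using (hx i).1
        | false => simpa using (hx i).2
    · intro ω _
      apply Finset.prod_nonneg
      intro i _
      cases hwi : ω i with
      | true => simpa using (hx i).1
      | false => simpa using (hx i).2
  · intro ω _ ω' _ hne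
    simp [Function.onFun, Set.disjoint_singleton, hne]
  · intro ω _
    exact measurableSet_singleton _

open Finset MeasureTheory

/-- Concentration for randomized rounding of a weighted coverage
function: if `g({i}) ≤ b` for all `i` and the multilinear extension value is at least
`2b`, then independent rounding `R` of `x` satisfies `g(R) ≥ b` except with
probability at most `e^{-1/4}`. -/
theorem coverage_rounding_concentration
    {α : Type*} [Fintype α] [DecidableEq α] {m : ℕ}
    (S : Fin m → Finset α) (A : α → ℝ) (hA : ∀ e, 0 ≤ A e)
    (b : ℝ) (hb : 0 < b)
    (hLip : ∀ i : Fin m, ∑ e ∈ S i, A e ≤ b)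
    (x : Fin m → ℝ) (hx : ∀ i, x i ∈ Set.Icc (0:ℝ) 1)
    (hG : 2 * b ≤
      ∑ e, A e * (1 - ∏ i ∈ Finset.univ.filter (fun i => e ∈ S i), (1 - x i))) :
    (Measure.pi (fun i : Fin m =>
        (PMF.bernoulli (Real.toNNReal (x i))
          (by simpa using Real.toNNReal_le_one.mpr (hx i).2)).toMeasure))
      {ω : Fin m → Bool |
        (∑ e ∈ (Finset.univ.filter (fun i => ω i = true)).biUnion S, A e) < b} ≤
      ENNReal.ofReal (Real.exp (-(1 / 4))) := by
  classical
  set E : Set (Fin m → Bool) := {ω : Fin m → Bool |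
    (∑ e ∈ (Finset.univ.filter (fun i => ω i = true)).biUnion S, A e) < b} with hE
  calc (Measure.pi (fun i : Fin m =>
        (PMF.bernoulli (Real.toNNReal (x i))
          (by simpa using Real.toNNReal_le_one.mpr (hx i).2)).toMeasure)) E
      = ENNReal.ofReal (∑ ω ∈ univ.filter (· ∈ E), ∏ i, (if ω i then x i else 1 - x i)) :=
        measure_pi_bernoulli_eq x hx E
    _ ≤ ENNReal.ofReal (Real.exp (-(1 / 4))) := by
        apply ENNReal.ofReal_le_ofReal
        have hcore := core_real S A hA b hb hLip x hx hG (· ∈ E) (fun ω => Classical.propDecidable _)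
          (fun ω h => by simpa [hE, Set.mem_setOf_eq] using h)
        have : (1:ℝ)/4 = 1/4 := rfl
        calc ∑ ω ∈ univ.filter (· ∈ E), ∏ i, (if ω i then x i else 1 - x i)
            ≤ Real.exp (-(1/4)) := by
              convert hcore using 2
          _ = Real.exp (-(1 / 4)) := rfl
end
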